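/- arXiv:2310.09033 — 10 statements merged into one kernel-verified Lean document; each statement's English description precedes it below -/
import Mathlib

section
/- There is no r-regular distance magic graph with r odd. -/
/-- The label set `{1-n, 3-n, ..., n-1}`. -/
def zeroLabels (n : ℕ) : Set ℤ := {a : ℤ | ∃ k : ℕ, k < n ∧ a = 2 * k + 1 - n}

/-- The weight of a vertex: the sum of the labels of its neighbors. -/
noncomputable def wt {V : Type*} (G : SimpleGraph V) (ℓ : V → ℤ) (v : V) : ℤ :=
  ∑ᶠ u ∈ {u | G.Adj v u}, ℓ u

/-- `G` is `r`-regular: every vertex has exactly `r` neighbors. -/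
def IsReg {V : Type*} (G : SimpleGraph V) (r : ℕ) : Prop :=
  ∀ v, {u | G.Adj v u}.ncard = r

/-- Distance magic (standard form): a bijective labeling with labels `{1, ..., n}` and
constant vertex weight. -/
def IsDMStd {V : Type*} (G : SimpleGraph V) (n : ℕ) : Prop :=
  ∃ ℓ : V → ℤ, Function.Injective ℓ ∧ Set.range ℓ = Set.Icc (1 : ℤ) (n : ℤ) ∧
    ∃ κ : ℤ, ∀ v, wt G ℓ v = κ

/-- Distance magic (zero form): a bijective labeling with labels `{1-n, 3-n, ..., n-1}` and
all vertex weights equal to `0`. -/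
def IsDMZero {V : Type*} (G : SimpleGraph V) (n : ℕ) : Prop :=
  ∃ ℓ : V → ℤ, Function.Injective ℓ ∧ Set.range ℓ = zeroLabels n ∧ ∀ v, wt G ℓ v = 0

/-- The wreath graph `W n`: vertices `u_i = (i, false)`, `v_i = (i, true)`,
two vertices adjacent iff their indices differ by `1` in `ZMod n`. -/
def wreath (n : ℕ) : SimpleGraph (ZMod n × Bool) where
  Adj a b := a.1 ≠ b.1 ∧ (b.1 = a.1 + 1 ∨ a.1 = b.1 + 1)
  symm := ⟨by rintro a b ⟨h1, h2⟩; exact ⟨h1.symm, h2.symm⟩⟩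
  loopless := ⟨by rintro a ⟨h1, _⟩; exact h1 rfl⟩

/-- One direction of quasi wreath adjacency, with `x_i = (i, false)` and `y_i = (i, true)`. -/
def qwBase {m : ℕ} (s : ZMod m → Bool) (a b : ZMod m × Bool) : Prop :=
  (a.2 = b.2 ∧ b.1 = a.1 + 1) ∨
  (a.2 ≠ b.2 ∧ b.1 = a.1 ∧ (s a.1 = false ∨ s (a.1 - 1) = false)) ∨
  (a.2 ≠ b.2 ∧ b.1 = a.1 + 1 ∧ s a.1 = true)

/-- The quasi wreath graph `QW(S)` determined by `s : ZMod m → Bool`. -/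
def qwGraph (m : ℕ) (s : ZMod m → Bool) : SimpleGraph (ZMod m × Bool) where
  Adj a b := a ≠ b ∧ (qwBase s a b ∨ qwBase s b a)
  symm := ⟨by rintro a b ⟨h1, h2⟩; exact ⟨h1.symm, h2.symm⟩⟩
  loopless := ⟨by rintro a ⟨h1, _⟩; exact h1 rfl⟩

/-- The conditions on the sequence `S` in the construction of quasi wreath graphs:
`m ≥ 3`, `s 0 = 0`, `s (m-1) = 1`, and no two cyclically consecutive entries are `0`. -/
def qwValid (m : ℕ) (s : ZMod m → Bool) : Prop :=
  3 ≤ m ∧ s 0 = false ∧ s (-1) = true ∧ ∀ i : ZMod m, s i = true ∨ s (i + 1) = true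

/-- The block label `ℓ_i = ℓ(x_i) + ℓ(y_i)`. -/
def blockLabel {m : ℕ} (ℓ : ZMod m × Bool → ℤ) (i : ZMod m) : ℤ :=
  ℓ (i, false) + ℓ (i, true)

/-- The blocks `B_{i+1}, ..., B_{i+j}` form a segment of length `j`:
`s i = 0` and `j ≥ 1` is minimal with `s (i+j) = 0`. -/
def IsSegment {m : ℕ} (s : ZMod m → Bool) (i : ZMod m) (j : ℕ) : Prop :=
  s i = false ∧ 1 ≤ j ∧ s (i + (j : ZMod m)) = false ∧
    ∀ r : ℕ, 1 ≤ r → r < j → s (i + (r : ZMod m)) = true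



theorem stmt1_gauss_aux (n : ℕ) : (∑ x ∈ Finset.Icc (1:ℤ) n, x) * 2 = n * (n+1) := by
  have himg : Finset.Icc (1:ℤ) n = Finset.image (fun i : ℕ => (i:ℤ)+1) (Finset.range n) := by
    ext x
    simp only [Finset.mem_Icc, Finset.mem_image, Finset.mem_range]
    constructor
    · rintro ⟨h1, h2⟩
      exact ⟨(x-1).toNat, by omega, by omega⟩
    · rintro ⟨i, hi, rfl⟩; omega
  rw [himg, Finset.sum_image (by intro a _ b _ h; beta_reduce at h; omega)]
  have h2 : ((∑ i ∈ Finset.range n, i : ℕ) : ℤ) * 2 = (n:ℤ) * ((n:ℤ) - 1) := by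
    have h := Finset.sum_range_id_mul_two n
    rcases Nat.eq_zero_or_pos n with h0 | h0
    · subst h0; simp
    · zify [h0] at h; push_cast at h ⊢; linarith
  rw [Finset.sum_add_distrib]
  simp only [Finset.sum_const, Finset.card_range, nsmul_eq_mul, mul_one]
  push_cast at h2 ⊢
  linarith

theorem stmt1_aux {V : Type*} [Fintype V] [Nonempty V] (G : SimpleGraph V) (r : ℕ)
    (hodd : Odd r) (hreg : ∀ v, {u | G.Adj v u}.ncard = r)
    (H : ∃ ℓ : V → ℤ, Function.Injective ℓ ∧
      Set.range ℓ = Set.Icc (1 : ℤ) (Fintype.card V : ℤ) ∧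
      ∃ κ : ℤ, ∀ v, (∑ᶠ u ∈ {u | G.Adj v u}, ℓ u) = κ) : False := by
  classical
  obtain ⟨ℓ, hinj, hrange, κ, hκ⟩ := H
  haveI : DecidableRel G.Adj := Classical.decRel _
  set n := Fintype.card V with hn
  have hnpos : 0 < n := Fintype.card_pos
  -- weight as finset sum
  have hwt : ∀ v, (∑ᶠ u ∈ {u | G.Adj v u}, ℓ u) = ∑ u ∈ G.neighborFinset v, ℓ u := by
    intro v
    rw [← finsum_mem_coe_finset]
    congr 1
    ext u; simp [SimpleGraph.mem_neighborFinset]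
  -- degree = r
  have hdeg : ∀ v, G.degree v = r := by
    intro v
    have h := hreg v
    rwa [Set.ncard_eq_toFinset_card'] at h
  -- handshake
  have hhs : n * r = 2 * G.edgeFinset.card := by
    have := SimpleGraph.sum_degrees_eq_twice_card_edges G
    simp only [hdeg, Finset.sum_const, Finset.card_univ, smul_eq_mul] at this
    exact this
  -- total label sum
  set T : ℤ := ∑ u, ℓ u with hT
  have himg : Finset.univ.image ℓ = Finset.Icc (1:ℤ) (n:ℤ) := by
    apply Finset.coe_injective
    rw [Finset.coe_image, Finset.coe_univ, Set.image_univ, hrange, Finset.coe_Icc]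
  have hTval : T * 2 = (n:ℤ) * ((n:ℤ) + 1) := by
    have : T = ∑ x ∈ Finset.Icc (1:ℤ) (n:ℤ), x := by
      rw [← himg, Finset.sum_image (fun a _ b _ h => hinj h)]
    rw [this]; exact_mod_cast stmt1_gauss_aux n
  -- double counting
  have hdc : (n : ℤ) * κ = (r : ℤ) * T := by
    have h1 : ∑ v : V, (∑ u ∈ G.neighborFinset v, ℓ u) = (n : ℤ) * κ := by
      have : ∀ v : V, (∑ u ∈ G.neighborFinset v, ℓ u) = κ := fun v => by
        rw [← hwt v]; exact hκ v
      simp [this, Finset.card_univ, hn]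
    have h2 : ∑ v : V, (∑ u ∈ G.neighborFinset v, ℓ u) = (r : ℤ) * T := by
      have hfil : ∀ v : V, G.neighborFinset v = Finset.univ.filter (G.Adj v) := by
        intro v; ext u; simp
      calc ∑ v : V, (∑ u ∈ G.neighborFinset v, ℓ u)
          = ∑ v : V, ∑ u : V, if G.Adj v u then ℓ u else 0 := by
            refine Finset.sum_congr rfl fun v _ => ?_
            rw [hfil v, Finset.sum_filter]
        _ = ∑ u : V, ∑ v : V, if G.Adj v u then ℓ u else 0 := Finset.sum_comm
        _ = ∑ u : V, (r : ℤ) * ℓ u := by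
            refine Finset.sum_congr rfl fun u _ => ?_
            rw [← Finset.sum_filter]
            have : Finset.univ.filter (fun v => G.Adj v u) = G.neighborFinset u := by
              ext v; simp [G.adj_comm]
            rw [this, Finset.sum_const, ← hdeg u, SimpleGraph.degree]
            simp [mul_comm]
        _ = (r : ℤ) * T := by rw [hT, Finset.mul_sum]
    rw [← h1, h2]
  -- endgame
  obtain ⟨s, hs⟩ := hodd
  have heq : 2 * ((n:ℤ) * κ) = (r : ℤ) * ((n:ℤ) * ((n:ℤ)+1)) := by
    rw [hdc, ← hTval]; ring
  have hn1 : (2 : ℤ) * κ = (r : ℤ) * ((n:ℤ)+1) := by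
    have hne : (n : ℤ) ≠ 0 := by exact_mod_cast hnpos.ne'
    apply mul_left_cancel₀ hne
    ring_nf
    ring_nf at heq
    linarith
  -- n even from handshake
  have hneven : Even n := by
    have : Even (n * r) := ⟨G.edgeFinset.card, by omega⟩
    rcases Nat.even_mul.mp this with h | h
    · exact h
    · exact absurd h (Nat.not_even_iff_odd.mpr ⟨s, hs⟩)
  -- n odd from hn1
  have hnodd : Even ((n:ℤ) + 1) := by
    have : Even ((r:ℤ) * ((n:ℤ)+1)) := ⟨κ, by linarith⟩
    rcases Int.even_mul.mp this with h | h
    · exfalso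
      have : Odd (r : ℤ) := ⟨s, by exact_mod_cast hs⟩
      exact (Int.not_even_iff_odd.mpr this) h
    · exact h
  obtain ⟨a, ha⟩ := hneven
  obtain ⟨b, hb⟩ := hnodd
  omega

theorem stmt1 {V : Type*} [Fintype V] [Nonempty V] (G : SimpleGraph V) (r : ℕ)
    (hodd : Odd r) (hreg : IsReg G r) :
    ¬ IsDMStd G (Fintype.card V) := by
  intro H
  exact stmt1_aux G r hodd hreg H
end

section
/- For every integer n ≥ 3, the wreath graph W(n) is distance magic; explicitly, the labeling assigning to the pair u_i, v_i the labels 2n−2i−1 and −(2n−2i−1) for each i ∈ Z_n is a bijection onto {1−2n, 3−2n, ..., 2n−1} giving every vertex weight 0. -/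
theorem stmt3 (n : ℕ) (hn : 3 ≤ n) :
    let ℓ : ZMod n × Bool → ℤ :=
      fun a => (if a.2 then (-1 : ℤ) else 1) * (2 * n - 2 * (a.1.val : ℤ) - 1)
    Function.Injective ℓ ∧ Set.range ℓ = zeroLabels (2 * n) ∧
      (∀ v, wt (wreath n) ℓ v = 0) ∧ IsDMZero (wreath n) (2 * n) := by
  intro ℓ
  haveI : NeZero n := ⟨by omega⟩
  have hval : ∀ i : ZMod n, i.val < n := fun i => ZMod.val_lt i
  have hdvd : ∀ k : ℕ, 0 < k → k < 3 → ((k : ZMod n) ≠ 0) := by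
    intro k hk hk3 h
    have : n ∣ k := (ZMod.natCast_eq_zero_iff k n).mp h
    have := Nat.le_of_dvd hk this
    omega
  have h1 : (1 : ZMod n) ≠ 0 := by
    have := hdvd 1 one_pos (by omega); simpa using this
  have h2 : (2 : ZMod n) ≠ 0 := by
    have := hdvd 2 two_pos (by omega); simpa using this
  have hinj : Function.Injective ℓ := by
    rintro ⟨i, b⟩ ⟨j, c⟩ h
    have hi := hval i
    have hj := hval j
    have hij : i.val = j.val ∧ b = c := by
      cases b <;> cases c <;>
          simp only [ℓ, if_true, Bool.false_eq_true, if_false, one_mul, neg_one_mul,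
            neg_sub] at h
      · exact ⟨by omega, rfl⟩
      · exact absurd h (by omega)
      · exact absurd h (by omega)
      · exact ⟨by omega, rfl⟩
    exact Prod.ext (ZMod.val_injective n hij.1) hij.2
  have hrange : Set.range ℓ = zeroLabels (2 * n) := by
    ext a
    constructor
    · rintro ⟨⟨i, b⟩, rfl⟩
      have hi := hval i
      cases b
      · refine ⟨2 * n - 1 - i.val, by omega, ?_⟩
        simp only [ℓ, Bool.false_eq_true, if_false, one_mul]
        push_cast
        omega
      · refine ⟨i.val, by omega, ?_⟩
        simp only [ℓ, if_true, neg_one_mul, neg_sub]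
        push_cast
        ring
    · rintro ⟨k, hk, rfl⟩
      by_cases hkn : k < n
      · refine ⟨((k : ZMod n), true), ?_⟩
        simp only [ℓ, if_true, neg_one_mul, neg_sub, ZMod.val_cast_of_lt hkn]
        push_cast
        ring
      · refine ⟨(((2 * n - 1 - k : ℕ) : ZMod n), false), ?_⟩
        simp only [ℓ, Bool.false_eq_true, if_false, one_mul,
          ZMod.val_cast_of_lt (show 2 * n - 1 - k < n by omega)]
        push_cast
        omega
  have hwt : ∀ v, wt (wreath n) ℓ v = 0 := by
    rintro ⟨i, b⟩
    have hne : i + 1 ≠ i - 1 := by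
      intro h
      exact h2 (by linear_combination h)
    have hset : {u | (wreath n).Adj (i, b) u} =
        ↑({(i + 1, false), (i + 1, true), (i - 1, false), (i - 1, true)} :
          Finset (ZMod n × Bool)) := by
      ext ⟨j, c⟩
      simp only [wreath, SimpleGraph.Adj, Set.mem_setOf_eq, Finset.coe_insert,
        Set.mem_insert_iff, Finset.coe_singleton, Set.mem_singleton_iff, Prod.mk.injEq]
      constructor
      · rintro ⟨hji, hj1 | hj1⟩
        · cases c
          · exact Or.inl ⟨hj1, rfl⟩
          · exact Or.inr (Or.inl ⟨hj1, rfl⟩)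
        · have hj2 : j = i - 1 := by linear_combination -hj1
          cases c
          · exact Or.inr (Or.inr (Or.inl ⟨hj2, rfl⟩))
          · exact Or.inr (Or.inr (Or.inr ⟨hj2, rfl⟩))
      · rintro (⟨rfl, rfl⟩ | ⟨rfl, rfl⟩ | ⟨rfl, rfl⟩ | ⟨rfl, rfl⟩)
        · exact ⟨fun h => h1 (by linear_combination -h), Or.inl rfl⟩
        · exact ⟨fun h => h1 (by linear_combination -h), Or.inl rfl⟩
        · exact ⟨fun h => h1 (by linear_combination h), Or.inr (by ring)⟩
        · exact ⟨fun h => h1 (by linear_combination h), Or.inr (by ring)⟩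
    have hblock : ∀ j : ZMod n, ℓ (j, false) + ℓ (j, true) = 0 := by
      intro j
      simp only [ℓ, if_true, Bool.false_eq_true, if_false, one_mul, neg_one_mul]
      ring
    rw [wt, hset, finsum_mem_coe_finset]
    have d1 : ((i + 1, false) : ZMod n × Bool) ∉
        ({(i + 1, true), (i - 1, false), (i - 1, true)} : Finset (ZMod n × Bool)) := by
      simp [Prod.ext_iff, hne]
    have d2 : ((i + 1, true) : ZMod n × Bool) ∉
        ({(i - 1, false), (i - 1, true)} : Finset (ZMod n × Bool)) := by
      simp [Prod.ext_iff, hne]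
    have d3 : ((i - 1, false) : ZMod n × Bool) ∉
        ({(i - 1, true)} : Finset (ZMod n × Bool)) := by
      simp
    rw [Finset.sum_insert d1, Finset.sum_insert d2, Finset.sum_insert d3, Finset.sum_singleton]
    have e1 := hblock (i + 1)
    have e2 := hblock (i - 1)
    linarith
  exact ⟨hinj, hrange, hwt, ℓ, hinj, hrange, hwt⟩
end

section
/- Let Γ be a regular graph of even valency and order n. Suppose 0 is an eigenvalue of the adjacency matrix of Γ and B is a basis of the eigenspace for eigenvalue 0. If there exist indices i ≠ j such that b(i) = b(j) for all b ∈ B, then Γ is not distance magic. -/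
lemma wt_eq_sum {V : Type*} [Fintype V] [DecidableEq V] (G : SimpleGraph V)
    [DecidableRel G.Adj] (ℓ : V → ℤ) (v : V) :
    wt G ℓ v = ∑ u ∈ G.neighborFinset v, ℓ u := by
  rw [wt, ← finsum_mem_coe_finset]
  congr 1
  simp [SimpleGraph.neighborFinset, Set.ext_iff]

lemma gauss (n : ℕ) : 2 * ∑ a ∈ Finset.Icc (1:ℤ) (n:ℤ), a = n * (n+1) := by
  induction n with
  | zero => simp
  | succ m ih =>
    have h : Finset.Icc (1:ℤ) ((m:ℤ)+1) = insert ((m:ℤ)+1) (Finset.Icc 1 (m:ℤ)) := by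
      ext a; simp only [Finset.mem_Icc, Finset.mem_insert]; omega
    push_cast
    rw [h, Finset.sum_insert (by simp)]
    push_cast at ih
    ring_nf
    ring_nf at ih
    linarith

lemma reg_degree {V : Type*} [Fintype V] [DecidableEq V] (G : SimpleGraph V)
    [DecidableRel G.Adj] {r : ℕ} (hreg : IsReg G r) (v : V) : G.degree v = r := by
  have := hreg v
  rw [Set.ncard_eq_toFinset_card', Set.toFinset_setOf] at this
  rwa [SimpleGraph.degree, SimpleGraph.neighborFinset_eq_filter]

theorem stmt4 {V : Type*} [Fintype V] [DecidableEq V] (G : SimpleGraph V)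
    [DecidableRel G.Adj] (r : ℕ) (hr : Even r) (hreg : IsReg G r)
    (hev : Module.End.HasEigenvalue (Matrix.toLin' (G.adjMatrix ℝ)) 0)
    {ι : Type*} (B : Module.Basis ι ℝ ↥(Module.End.eigenspace (Matrix.toLin' (G.adjMatrix ℝ)) 0))
    (i j : V) (hij : i ≠ j)
    (hB : ∀ k : ι, (B k : V → ℝ) i = (B k : V → ℝ) j) :
    ¬ IsDMStd G (Fintype.card V) := by
  rintro ⟨ℓ, hinj, hrange, κ, hκ⟩
  set n := Fintype.card V with hn
  have hnpos : 0 < n := Fintype.card_pos_iff.mpr ⟨i⟩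
  -- sum of labels
  have himg : Finset.image ℓ Finset.univ = Finset.Icc (1:ℤ) (n:ℤ) := by
    apply Finset.coe_injective
    rw [Finset.coe_image, Finset.coe_univ, Set.image_univ, hrange, Finset.coe_Icc]
  have hsumℓ : ∑ v, ℓ v = ∑ a ∈ Finset.Icc (1:ℤ) (n:ℤ), a := by
    rw [← himg, Finset.sum_image (fun a _ b _ h => hinj h)]
  -- double counting
  have hdouble : ∑ v, wt G ℓ v = (r : ℤ) * ∑ v, ℓ v := by
    have : ∀ v, wt G ℓ v = ∑ u, if G.Adj v u then ℓ u else 0 := by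
      intro v
      rw [wt_eq_sum, SimpleGraph.neighborFinset_eq_filter, Finset.sum_filter]
    simp_rw [this]
    rw [Finset.sum_comm]
    rw [Finset.mul_sum]
    congr 1; ext u
    have : ∑ v, (if G.Adj v u then ℓ u else 0) = ∑ v ∈ G.neighborFinset u, ℓ u := by
      rw [SimpleGraph.neighborFinset_eq_filter, Finset.sum_filter]
      congr 1; ext v; simp [SimpleGraph.adj_comm]
    rw [this, Finset.sum_const, SimpleGraph.card_neighborFinset_eq_degree,
      reg_degree G hreg, nsmul_eq_mul]
  -- κ value : 2κ = r (n+1)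
  have hκval : 2 * κ = (r : ℤ) * (n + 1) := by
    have h1 : (n : ℤ) * κ = (r : ℤ) * ∑ v, ℓ v := by
      rw [← hdouble]
      simp [hκ, hn, Finset.sum_const, mul_comm]
    have h2 : (n : ℤ) * (2 * κ) = (n : ℤ) * ((r:ℤ) * (n+1)) := by
      have := gauss n
      rw [← hsumℓ] at this
      calc (n : ℤ) * (2 * κ) = 2 * ((n:ℤ) * κ) := by ring
        _ = 2 * ((r : ℤ) * ∑ v, ℓ v) := by rw [h1]
        _ = (r : ℤ) * (2 * ∑ v, ℓ v) := by ring
        _ = (r : ℤ) * ((n:ℤ) * (n+1)) := by rw [this]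
        _ = (n : ℤ) * ((r:ℤ) * (n+1)) := by ring
    exact mul_left_cancel₀ (by exact_mod_cast hnpos.ne') h2
  -- the vector y
  set y : V → ℝ := fun v => 2 * (ℓ v : ℝ) - ((n : ℝ) + 1) with hy
  have hymem : y ∈ Module.End.eigenspace (Matrix.toLin' (G.adjMatrix ℝ)) 0 := by
    rw [Module.End.mem_eigenspace_iff]
    rw [zero_smul]
    funext v
    simp only [Pi.zero_apply]
    rw [Matrix.toLin'_apply, SimpleGraph.adjMatrix_mulVec_apply]
    simp only [hy, Finset.sum_sub_distrib, Finset.sum_const,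
      SimpleGraph.card_neighborFinset_eq_degree, reg_degree G hreg, ← Finset.mul_sum,
      nsmul_eq_mul]
    have : ∑ u ∈ G.neighborFinset v, (ℓ u : ℝ) = ((wt G ℓ v : ℤ) : ℝ) := by
      rw [wt_eq_sum]; push_cast; ring
    rw [this, hκ v]
    have : ((2 * κ : ℤ) : ℝ) = (((r : ℤ) * (n+1) : ℤ) : ℝ) := by rw [hκval]
    push_cast at this ⊢
    linarith
  -- linear functional
  let φ : ↥(Module.End.eigenspace (Matrix.toLin' (G.adjMatrix ℝ)) 0) →ₗ[ℝ] ℝ :=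
    { toFun := fun x => (x : V → ℝ) i - (x : V → ℝ) j
      map_add' := fun a b => by simp; ring
      map_smul' := fun c a => by simp; ring }
  have hφ : φ = 0 := B.ext fun k => by
    simp only [φ, LinearMap.coe_mk, AddHom.coe_mk, hB k, sub_self, LinearMap.zero_apply]
  have : φ ⟨y, hymem⟩ = 0 := by rw [hφ]; rfl
  simp only [φ, LinearMap.coe_mk, AddHom.coe_mk, sub_eq_zero] at this
  have : (ℓ i : ℝ) = ℓ j := by
    simp only [hy] at this; linarith
  exact hij (hinj (by exact_mod_cast this))
end

section
/- Let QW(S) be a distance magic quasi wreath graph with distance magic labeling ℓ (labels from {1−2m,...,2m−1}, all vertex weights 0), and let ℓ_i = ℓ(x_i) + ℓ(y_i) denote block labels. Then for every i ∈ Z_m with s_i = 0 one has ℓ_{i+1} ≠ −ℓ_{i+2}. -/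
private lemma qw_nbhd (m : ℕ) (hm : 3 ≤ m) (s : ZMod m → Bool) (i : ZMod m)
    (hi : s i = false) (hi1 : s (i+1) = true) :
    {u | (qwGraph m s).Adj (i+1, false) u} =
      {((i:ZMod m), false), (i+1, true), (i+2, false), (i+2, true)} := by
  haveI : NeZero m := ⟨by omega⟩
  have h1 : (1 : ZMod m) ≠ 0 := by
    intro h
    have : (m : ℕ) ∣ 1 := by
      exact_mod_cast (ZMod.natCast_eq_zero_iff 1 m).mp (by exact_mod_cast h)
    have := Nat.le_of_dvd one_pos this; omega
  have h12 : (1 : ZMod m) ≠ 2 := fun h => h1 (by linear_combination -h)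
  have e01 : i ≠ i + 1 := by
    intro h; apply h1; linear_combination -h
  ext ⟨j, b⟩
  show (qwGraph m s).Adj (i+1, false) (j, b) ↔ _
  simp only [Set.mem_insert_iff, Set.mem_singleton_iff, Prod.mk.injEq]
  constructor
  · rintro ⟨hne, h | h⟩
    · rcases h with ⟨hb, hj⟩ | ⟨hb, hj, hs⟩ | ⟨hb, hj, hs⟩
      · simp only at hb hj
        right; right; left; exact ⟨by rw [hj]; ring, hb.symm⟩
      · simp only at hb hj
        right; left; exact ⟨hj, by simpa using hb⟩
      · simp only at hb hj
        right; right; right; exact ⟨by rw [hj]; ring, by simpa using hb⟩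
    · rcases h with ⟨hb, hj⟩ | ⟨hb, hj, hs⟩ | ⟨hb, hj, hs⟩
      · simp only at hb hj
        left; exact ⟨by linear_combination -hj, hb⟩
      · simp only at hb hj
        right; left; exact ⟨hj.symm, by simpa using hb.symm⟩
      · simp only at hb hj hs
        exfalso
        have : j = i := by linear_combination -hj
        rw [this, hi] at hs; exact Bool.false_ne_true hs
  · rintro (⟨rfl, rfl⟩ | ⟨rfl, rfl⟩ | ⟨rfl, rfl⟩ | ⟨rfl, rfl⟩)
    · exact ⟨by simp [e01.symm], Or.inr (Or.inl ⟨rfl, rfl⟩)⟩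
    · refine ⟨by simp, Or.inl (Or.inr (Or.inl ⟨by simp, rfl, Or.inr ?_⟩))⟩
      simpa using hi
    · exact ⟨by simp [h12], Or.inl (Or.inl ⟨rfl, by ring⟩)⟩
    · exact ⟨by simp, Or.inl (Or.inr (Or.inr ⟨by simp, by ring, hi1⟩))⟩

theorem stmt6 (m : ℕ) (s : ZMod m → Bool) (hv : qwValid m s)
    (ℓ : ZMod m × Bool → ℤ) (hinj : Function.Injective ℓ)
    (hrange : Set.range ℓ = zeroLabels (2 * m))
    (hw : ∀ v, wt (qwGraph m s) ℓ v = 0)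
    (i : ZMod m) (hi : s i = false) :
    blockLabel ℓ (i + 1) ≠ -blockLabel ℓ (i + 2) := by
  obtain ⟨hm, -, -, hcons⟩ := hv
  haveI : NeZero m := ⟨by omega⟩
  have h1 : (1 : ZMod m) ≠ 0 := by
    intro h
    have : (m : ℕ) ∣ 1 := by
      exact_mod_cast (ZMod.natCast_eq_zero_iff 1 m).mp (by exact_mod_cast h)
    have := Nat.le_of_dvd one_pos this; omega
  have h2 : (2 : ZMod m) ≠ 0 := by
    intro h
    have : (m : ℕ) ∣ 2 := by
      exact_mod_cast (ZMod.natCast_eq_zero_iff 2 m).mp (by exact_mod_cast h)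
    have := Nat.le_of_dvd two_pos this; omega
  have hi1 : s (i + 1) = true := by
    rcases hcons i with h | h
    · rw [hi] at h; exact absurd h Bool.false_ne_true
    · exact h
  have e01 : i ≠ i + 1 := fun h => h1 (by linear_combination -h)
  have e02 : i ≠ i + 2 := fun h => h2 (by linear_combination -h)
  have e12 : i + 1 ≠ i + 2 := fun h => h1 (by linear_combination -h)
  have hN := qw_nbhd m hm s i hi hi1
  have hfin : ({((i:ZMod m), false), (i+1, true), (i+2, false), (i+2, true)} : Set (ZMod m × Bool))
      = (↑({((i:ZMod m), false), (i+1, true), (i+2, false), (i+2, true)} :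
          Finset (ZMod m × Bool)) : Set (ZMod m × Bool)) := by
    simp
  have hwt : ℓ (i, false) + (ℓ (i+1, true) + (ℓ (i+2, false) + ℓ (i+2, true))) = 0 := by
    have := hw (i+1, false)
    rw [wt, hN, hfin, finsum_mem_coe_finset] at this
    rw [Finset.sum_insert (by simp [Prod.ext_iff, e02]),
        Finset.sum_insert (by simp [Prod.ext_iff, e12]),
        Finset.sum_insert (by simp), Finset.sum_singleton] at this
    exact this
  intro heq
  unfold blockLabel at heq
  have hx : ℓ (i, false) = ℓ (i + 1, false) := by linarith
  have := hinj hx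
  rw [Prod.mk.injEq] at this
  exact e01 this.1
end

section
/- Let QW(S) be a distance magic quasi wreath graph with distance magic labeling ℓ and block labels ℓ_i = ℓ(x_i) + ℓ(y_i). Then for each i ∈ Z_m: if s_i = s_{i+1} = 1 then ℓ_{i+2} = −ℓ_i; if s_i = 0 and s_{i+1} = 1 then ℓ_{i+2} = −(ℓ_i + ℓ_{i+1})/2; and if s_i = 1 and s_{i+1} = 0 then ℓ_{i+2} = −2ℓ_i − ℓ_{i+1}. -/
lemma qw_adj_iff' {m : ℕ} {s : ZMod m → Bool} (h1 : (1 : ZMod m) ≠ 0)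
    (i j : ZMod m) (b c : Bool) :
    (qwGraph m s).Adj (i, b) (j, c) ↔
      (c = b ∧ (j = i + 1 ∨ j = i - 1)) ∨
      (c = !b ∧ j = i ∧ (s i = false ∨ s (i - 1) = false)) ∨
      (c = !b ∧ j = i + 1 ∧ s i = true) ∨
      (c = !b ∧ j = i - 1 ∧ s (i - 1) = true) := by
  have hne1 : ∀ k : ZMod m, k ≠ k + 1 := fun k h => h1 (by linear_combination -h)
  have hne2 : ∀ k : ZMod m, k ≠ k - 1 := fun k h => h1 (by linear_combination h)
  show ((i,b) ≠ (j,c) ∧ (qwBase s (i,b) (j,c) ∨ qwBase s (j,c) (i,b))) ↔ _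
  unfold qwBase
  simp only [ne_eq, Prod.mk.injEq, not_and]
  constructor
  · rintro ⟨hne, h⟩
    rcases h with (⟨hbc, hj⟩ | ⟨hbc, hj, hs⟩ | ⟨hbc, hj, hs⟩) | (⟨hbc, hj⟩ | ⟨hbc, hj, hs⟩ | ⟨hbc, hj, hs⟩)
    · exact Or.inl ⟨hbc.symm, Or.inl hj⟩
    · exact Or.inr (Or.inl ⟨Bool.eq_not_iff.mpr (Ne.symm hbc), hj, hs⟩)
    · exact Or.inr (Or.inr (Or.inl ⟨Bool.eq_not_iff.mpr (Ne.symm hbc), hj, hs⟩))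
    · exact Or.inl ⟨hbc, Or.inr (eq_sub_of_add_eq hj.symm)⟩
    · rcases hj with rfl; exact Or.inr (Or.inl ⟨Bool.eq_not_iff.mpr hbc, rfl, hs⟩)
    · have hj' : j = i - 1 := eq_sub_of_add_eq hj.symm
      subst hj'
      exact Or.inr (Or.inr (Or.inr ⟨Bool.eq_not_iff.mpr hbc, rfl, hs⟩))
  · rintro ((⟨rfl, rfl | rfl⟩) | ⟨rfl, rfl, hs⟩ | ⟨rfl, rfl, hs⟩ | ⟨rfl, rfl, hs⟩)
    · exact ⟨fun h _ => hne1 i h, Or.inl (Or.inl ⟨rfl, rfl⟩)⟩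
    · exact ⟨fun h _ => hne2 i h, Or.inr (Or.inl ⟨rfl, (sub_add_cancel i 1).symm⟩)⟩
    · exact ⟨fun _ h => (Bool.not_ne_self b) h.symm, Or.inl (Or.inr (Or.inl ⟨(fun h => Bool.not_ne_self b h.symm), rfl, hs⟩))⟩
    · exact ⟨fun _ h => (Bool.not_ne_self b) h.symm, Or.inl (Or.inr (Or.inr ⟨(fun h => Bool.not_ne_self b h.symm), rfl, hs⟩))⟩
    · exact ⟨fun _ h => (Bool.not_ne_self b) h.symm,
        Or.inr (Or.inr (Or.inr ⟨Bool.not_ne_self b, (sub_add_cancel i 1).symm, hs⟩))⟩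

lemma finsum_quad {V : Type*} (f : V → ℤ) (a b c d : V)
    (hab : a ≠ b) (hac : a ≠ c) (had : a ≠ d) (hbc : b ≠ c) (hbd : b ≠ d) (hcd : c ≠ d) :
    ∑ᶠ u ∈ ({a, b, c, d} : Set V), f u = f a + f b + f c + f d := by
  classical
  have h : ({a, b, c, d} : Set V) = (({a, b, c, d} : Finset V) : Set V) := by simp
  rw [h, finsum_mem_coe_finset]
  rw [Finset.sum_insert (by simp [hab, hac, had]),
    Finset.sum_insert (by simp [hbc, hbd]),
    Finset.sum_insert (by simp [hcd]), Finset.sum_singleton]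
  ring

lemma bne_not (b : Bool) : b ≠ !b := fun h => Bool.not_ne_self b h.symm

lemma wt_caseA {m : ℕ} {s : ZMod m → Bool} (h1 : (1 : ZMod m) ≠ 0)
    (h2 : (2 : ZMod m) ≠ 0) (ℓ : ZMod m × Bool → ℤ)
    (i : ZMod m) (b : Bool) (hA : s (i - 1) = true) (hB : s i = true) :
    wt (qwGraph m s) ℓ (i, b) =
      ℓ (i + 1, b) + ℓ (i - 1, b) + ℓ (i + 1, !b) + ℓ (i - 1, !b) := by
  have hpm : i + 1 ≠ i - 1 := fun h => h2 (by linear_combination h)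
  have hset : {u | (qwGraph m s).Adj (i, b) u} =
      ({(i + 1, b), (i - 1, b), (i + 1, !b), (i - 1, !b)} : Set (ZMod m × Bool)) := by
    ext ⟨j, c⟩
    rw [Set.mem_setOf_eq, qw_adj_iff' h1]
    simp only [hA, hB, Set.mem_insert_iff, Set.mem_singleton_iff, Prod.mk.injEq]
    constructor
    · rintro (⟨rfl, rfl | rfl⟩ | ⟨rfl, rfl, h | h⟩ | ⟨rfl, rfl, -⟩ | ⟨rfl, rfl, -⟩) <;> simp_all
    · rintro (⟨rfl, rfl⟩ | ⟨rfl, rfl⟩ | ⟨rfl, rfl⟩ | ⟨rfl, rfl⟩) <;> simp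
  rw [wt, hset]
  exact finsum_quad ℓ _ _ _ _
    (fun h => hpm (congrArg Prod.fst h))
    (fun h => bne_not b (congrArg Prod.snd h))
    (fun h => bne_not b (congrArg Prod.snd h))
    (fun h => bne_not b (congrArg Prod.snd h))
    (fun h => bne_not b (congrArg Prod.snd h))
    (fun h => hpm (congrArg Prod.fst h))

lemma wt_caseB {m : ℕ} {s : ZMod m → Bool} (h1 : (1 : ZMod m) ≠ 0)
    (h2 : (2 : ZMod m) ≠ 0) (ℓ : ZMod m × Bool → ℤ)
    (i : ZMod m) (b : Bool) (hA : s (i - 1) = false) (hB : s i = true) :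
    wt (qwGraph m s) ℓ (i, b) =
      ℓ (i + 1, b) + ℓ (i - 1, b) + ℓ (i, !b) + ℓ (i + 1, !b) := by
  have hpm : i + 1 ≠ i - 1 := fun h => h2 (by linear_combination h)
  have hne1 : ∀ k : ZMod m, k ≠ k + 1 := fun k h => h1 (by linear_combination -h)
  have hset : {u | (qwGraph m s).Adj (i, b) u} =
      ({(i + 1, b), (i - 1, b), (i, !b), (i + 1, !b)} : Set (ZMod m × Bool)) := by
    ext ⟨j, c⟩
    rw [Set.mem_setOf_eq, qw_adj_iff' h1]
    simp only [hA, hB, Set.mem_insert_iff, Set.mem_singleton_iff, Prod.mk.injEq]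
    constructor
    · rintro (⟨rfl, rfl | rfl⟩ | ⟨rfl, rfl, h | h⟩ | ⟨rfl, rfl, -⟩ | ⟨rfl, rfl, h⟩) <;> simp_all
    · rintro (⟨rfl, rfl⟩ | ⟨rfl, rfl⟩ | ⟨rfl, rfl⟩ | ⟨rfl, rfl⟩) <;> simp_all
  rw [wt, hset]
  exact finsum_quad ℓ _ _ _ _
    (fun h => hpm (congrArg Prod.fst h))
    (fun h => bne_not b (congrArg Prod.snd h))
    (fun h => bne_not b (congrArg Prod.snd h))
    (fun h => bne_not b (congrArg Prod.snd h))
    (fun h => bne_not b (congrArg Prod.snd h))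
    (fun h => hne1 i (congrArg Prod.fst h))

lemma wt_caseC {m : ℕ} {s : ZMod m → Bool} (h1 : (1 : ZMod m) ≠ 0)
    (h2 : (2 : ZMod m) ≠ 0) (ℓ : ZMod m × Bool → ℤ)
    (i : ZMod m) (b : Bool) (hA : s (i - 1) = true) (hB : s i = false) :
    wt (qwGraph m s) ℓ (i, b) =
      ℓ (i + 1, b) + ℓ (i - 1, b) + ℓ (i, !b) + ℓ (i - 1, !b) := by
  have hpm : i + 1 ≠ i - 1 := fun h => h2 (by linear_combination h)
  have hne2 : ∀ k : ZMod m, k ≠ k - 1 := fun k h => h1 (by linear_combination h)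
  have hset : {u | (qwGraph m s).Adj (i, b) u} =
      ({(i + 1, b), (i - 1, b), (i, !b), (i - 1, !b)} : Set (ZMod m × Bool)) := by
    ext ⟨j, c⟩
    rw [Set.mem_setOf_eq, qw_adj_iff' h1]
    simp only [hA, hB, Set.mem_insert_iff, Set.mem_singleton_iff, Prod.mk.injEq]
    constructor
    · rintro (⟨rfl, rfl | rfl⟩ | ⟨rfl, rfl, h | h⟩ | ⟨rfl, rfl, h⟩ | ⟨rfl, rfl, -⟩) <;> simp_all
    · rintro (⟨rfl, rfl⟩ | ⟨rfl, rfl⟩ | ⟨rfl, rfl⟩ | ⟨rfl, rfl⟩) <;> simp_all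
  rw [wt, hset]
  exact finsum_quad ℓ _ _ _ _
    (fun h => hpm (congrArg Prod.fst h))
    (fun h => bne_not b (congrArg Prod.snd h))
    (fun h => bne_not b (congrArg Prod.snd h))
    (fun h => bne_not b (congrArg Prod.snd h))
    (fun h => bne_not b (congrArg Prod.snd h))
    (fun h => hne2 i (congrArg Prod.fst h))

theorem stmt7 (m : ℕ) (s : ZMod m → Bool) (hv : qwValid m s)
    (ℓ : ZMod m × Bool → ℤ) (hinj : Function.Injective ℓ)
    (hrange : Set.range ℓ = zeroLabels (2 * m))
    (hw : ∀ v, wt (qwGraph m s) ℓ v = 0) (i : ZMod m) :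
    (s i = true → s (i + 1) = true →
      blockLabel ℓ (i + 2) = -blockLabel ℓ i) ∧
    (s i = false → s (i + 1) = true →
      2 * blockLabel ℓ (i + 2) = -(blockLabel ℓ i + blockLabel ℓ (i + 1))) ∧
    (s i = true → s (i + 1) = false →
      blockLabel ℓ (i + 2) = -(2 * blockLabel ℓ i) - blockLabel ℓ (i + 1)) := by
  obtain ⟨hm, -, -, -⟩ := hv
  haveI : NeZero m := ⟨by omega⟩
  have h1 : (1 : ZMod m) ≠ 0 := by
    intro h
    have hd := (ZMod.natCast_eq_zero_iff 1 m).mp (by exact_mod_cast h)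
    have := Nat.le_of_dvd one_pos hd
    omega
  have h2 : (2 : ZMod m) ≠ 0 := by
    intro h
    have hd := (ZMod.natCast_eq_zero_iff 2 m).mp (by exact_mod_cast h)
    have := Nat.le_of_dvd two_pos hd
    omega
  have hsub : (i + 1) - 1 = i := add_sub_cancel_right i 1
  have hadd : (i + 1) + 1 = i + 2 := by ring
  refine ⟨?_, ?_, ?_⟩
  · intro hsi hsi1
    have h := hw (i + 1, false)
    rw [wt_caseA h1 h2 ℓ (i + 1) false (by rw [hsub]; exact hsi) hsi1] at h
    rw [hadd, hsub] at h
    unfold blockLabel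
    simp only [Bool.not_false] at h
    linarith
  · intro hsi hsi1
    have ha := hw (i + 1, false)
    have hb := hw (i + 1, true)
    rw [wt_caseB h1 h2 ℓ (i + 1) false (by rw [hsub]; exact hsi) hsi1] at ha
    rw [wt_caseB h1 h2 ℓ (i + 1) true (by rw [hsub]; exact hsi) hsi1] at hb
    rw [hadd, hsub] at ha hb
    unfold blockLabel
    simp only [Bool.not_false, Bool.not_true] at ha hb
    linarith
  · intro hsi hsi1
    have ha := hw (i + 1, false)
    have hb := hw (i + 1, true)
    rw [wt_caseC h1 h2 ℓ (i + 1) false (by rw [hsub]; exact hsi) hsi1] at ha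
    rw [wt_caseC h1 h2 ℓ (i + 1) true (by rw [hsub]; exact hsi) hsi1] at hb
    rw [hadd, hsub] at ha hb
    unfold blockLabel
    simp only [Bool.not_false, Bool.not_true] at ha hb
    linarith
end

section
/- Let QW(S) be a distance magic quasi wreath graph with distance magic labeling ℓ and block labels ℓ_i. Suppose s_{k−i} = 0, s_{k+j} = 0 and s_{k−i+r} = 1 for all 1 ≤ r < i+j (so the blocks B_{k−i+1},...,B_{k+j} form a segment of length i+j). Writing a = ℓ_{k−i+1} and b = ℓ_{k−i+2}, one has ℓ_{k−i+r} = −b, a, b, −a according as r ≡ 0,1,2,3 mod 4 (for 1 ≤ r ≤ i+j), ℓ_{k−i} = −a − 2b, and ℓ_{k+j+1} equals 2a+b, 2b−a, −2a−b, −2b+a according as i+j ≡ 0,1,2,3 mod 4. -/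
section QWAux

lemma qw_zfacts {m : ℕ} (hm : 3 ≤ m) (i : ZMod m) :
    i + 1 ≠ i ∧ i - 1 ≠ i ∧ i + 1 ≠ i - 1 := by
  haveI : NeZero m := ⟨by omega⟩
  have h1 : (1 : ZMod m) ≠ 0 := by
    have := (ZMod.natCast_eq_zero_iff 1 m).not.mpr
      (fun h => by have := Nat.le_of_dvd one_pos h; omega)
    simpa using this
  have h2 : (2 : ZMod m) ≠ 0 := by
    have := (ZMod.natCast_eq_zero_iff 2 m).not.mpr
      (fun h => by have := Nat.le_of_dvd two_pos h; omega)
    simpa using this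
  refine ⟨?_, ?_, ?_⟩
  · intro h; exact h1 (by linear_combination h)
  · intro h; exact h1 (by linear_combination -h)
  · intro h; exact h2 (by linear_combination h)

lemma qw_sum4 {α : Type*} [DecidableEq α] (L : α → ℤ) (A B C D : α)
    (hAB : A ≠ B) (hAC : A ≠ C) (hAD : A ≠ D) (hBC : B ≠ C) (hBD : B ≠ D) (hCD : C ≠ D) :
    ∑ᶠ u ∈ ({A, B, C, D} : Set α), L u = L A + L B + L C + L D := by
  rw [show ({A, B, C, D} : Set α) = ↑({A, B, C, D} : Finset α) by simp,
    finsum_mem_coe_finset]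
  rw [Finset.sum_insert (by simp [hAB, hAC, hAD]), Finset.sum_insert (by simp [hBC, hBD]),
    Finset.sum_insert (by simp [hCD]), Finset.sum_singleton]
  ring

lemma qw_nbrTT {m : ℕ} (s : ZMod m → Bool) (hm : 3 ≤ m) (i : ZMod m) (c : Bool)
    (h1 : s (i - 1) = true) (h2 : s i = true) :
    {u | (qwGraph m s).Adj (i, c) u} = {(i+1, c), (i-1, c), (i+1, !c), (i-1, !c)} := by
  obtain ⟨z1, z2, z3⟩ := qw_zfacts hm i
  have z4 : i ≠ i + 1 := fun h => z1 h.symm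
  have z5 : i ≠ i - 1 := fun h => z2 h.symm
  have z6 : i - 1 ≠ i + 1 := fun h => z3 h.symm
  have z7 : i - 1 + 1 = i := by ring
  have z8 : i + 1 - 1 = i := by ring
  ext ⟨u1, u2⟩
  simp only [qwGraph, qwBase, SimpleGraph.Adj, Set.mem_setOf_eq, Set.mem_insert_iff,
    Set.mem_singleton_iff, ne_eq, Prod.mk.injEq, Prod.ext_iff]
  constructor
  · rintro ⟨hne, h | h⟩ <;>
      rcases h with ⟨hc, hi⟩ | ⟨hc, hi, hs⟩ | ⟨hc, hi, hs⟩ <;> cases u2 <;> cases c <;>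
      simp_all
  · rintro (⟨hi, hc⟩ | ⟨hi, hc⟩ | ⟨hi, hc⟩ | ⟨hi, hc⟩) <;> subst hi <;> cases c <;>
      simp_all [qwGraph, qwBase]

lemma qw_nbrFT {m : ℕ} (s : ZMod m → Bool) (hm : 3 ≤ m) (i : ZMod m) (c : Bool)
    (h1 : s (i - 1) = false) (h2 : s i = true) :
    {u | (qwGraph m s).Adj (i, c) u} = {(i+1, c), (i-1, c), (i, !c), (i+1, !c)} := by
  obtain ⟨z1, z2, z3⟩ := qw_zfacts hm i
  have z4 : i ≠ i + 1 := fun h => z1 h.symm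
  have z5 : i ≠ i - 1 := fun h => z2 h.symm
  have z6 : i - 1 ≠ i + 1 := fun h => z3 h.symm
  have z7 : i - 1 + 1 = i := by ring
  have z8 : i + 1 - 1 = i := by ring
  ext ⟨u1, u2⟩
  simp only [qwGraph, qwBase, SimpleGraph.Adj, Set.mem_setOf_eq, Set.mem_insert_iff,
    Set.mem_singleton_iff, ne_eq, Prod.mk.injEq, Prod.ext_iff]
  constructor
  · rintro ⟨hne, h | h⟩ <;>
      rcases h with ⟨hc, hi⟩ | ⟨hc, hi, hs⟩ | ⟨hc, hi, hs⟩ <;> cases u2 <;> cases c <;>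
      simp_all
  · rintro (⟨hi, hc⟩ | ⟨hi, hc⟩ | ⟨hi, hc⟩ | ⟨hi, hc⟩) <;> subst hi <;> cases c <;>
      simp_all [qwGraph, qwBase]

lemma qw_nbrTF {m : ℕ} (s : ZMod m → Bool) (hm : 3 ≤ m) (i : ZMod m) (c : Bool)
    (h1 : s (i - 1) = true) (h2 : s i = false) :
    {u | (qwGraph m s).Adj (i, c) u} = {(i+1, c), (i-1, c), (i, !c), (i-1, !c)} := by
  obtain ⟨z1, z2, z3⟩ := qw_zfacts hm i
  have z4 : i ≠ i + 1 := fun h => z1 h.symm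
  have z5 : i ≠ i - 1 := fun h => z2 h.symm
  have z6 : i - 1 ≠ i + 1 := fun h => z3 h.symm
  have z7 : i - 1 + 1 = i := by ring
  have z8 : i + 1 - 1 = i := by ring
  ext ⟨u1, u2⟩
  simp only [qwGraph, qwBase, SimpleGraph.Adj, Set.mem_setOf_eq, Set.mem_insert_iff,
    Set.mem_singleton_iff, ne_eq, Prod.mk.injEq, Prod.ext_iff]
  constructor
  · rintro ⟨hne, h | h⟩ <;>
      rcases h with ⟨hc, hi⟩ | ⟨hc, hi, hs⟩ | ⟨hc, hi, hs⟩ <;> cases u2 <;> cases c <;>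
      simp_all
  · rintro (⟨hi, hc⟩ | ⟨hi, hc⟩ | ⟨hi, hc⟩ | ⟨hi, hc⟩) <;> subst hi <;> cases c <;>
      simp_all [qwGraph, qwBase]

lemma qw_recTT {m : ℕ} (s : ZMod m → Bool) (hm : 3 ≤ m) (ℓ : ZMod m × Bool → ℤ)
    (hw : ∀ v, wt (qwGraph m s) ℓ v = 0) (i : ZMod m)
    (h1 : s (i - 1) = true) (h2 : s i = true) :
    blockLabel ℓ (i - 1) + blockLabel ℓ (i + 1) = 0 := by
  obtain ⟨z1, z2, z3⟩ := qw_zfacts hm i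
  have h := hw (i, false)
  rw [wt, qw_nbrTT s hm i false h1 h2,
    qw_sum4 ℓ _ _ _ _ (by simp [z3]) (by simp) (by simp [z3]) (by simp [z3])
      (by simp) (by simp [z3])] at h
  simp only [Bool.not_false] at h
  simp only [blockLabel]
  linarith

lemma qw_recFT {m : ℕ} (s : ZMod m → Bool) (hm : 3 ≤ m) (ℓ : ZMod m × Bool → ℤ)
    (hw : ∀ v, wt (qwGraph m s) ℓ v = 0) (i : ZMod m)
    (h1 : s (i - 1) = false) (h2 : s i = true) :
    blockLabel ℓ (i - 1) + blockLabel ℓ i + 2 * blockLabel ℓ (i + 1) = 0 := by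
  obtain ⟨z1, z2, z3⟩ := qw_zfacts hm i
  have z4 : i ≠ i + 1 := fun h => z1 h.symm
  have z5 : i ≠ i - 1 := fun h => z2 h.symm
  have hF := hw (i, false)
  have hT := hw (i, true)
  rw [wt, qw_nbrFT s hm i false h1 h2,
    qw_sum4 ℓ _ _ _ _ (by simp [z3]) (by simp [z1]) (by simp) (by simp [z2])
      (by simp [z3]) (by simp [z4])] at hF
  rw [wt, qw_nbrFT s hm i true h1 h2,
    qw_sum4 ℓ _ _ _ _ (by simp [z3]) (by simp [z1]) (by simp) (by simp [z2])
      (by simp [z3]) (by simp [z4])] at hT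
  simp only [blockLabel]
  simp only [Bool.not_false, Bool.not_true] at hF hT
  linarith

lemma qw_recTF {m : ℕ} (s : ZMod m → Bool) (hm : 3 ≤ m) (ℓ : ZMod m × Bool → ℤ)
    (hw : ∀ v, wt (qwGraph m s) ℓ v = 0) (i : ZMod m)
    (h1 : s (i - 1) = true) (h2 : s i = false) :
    2 * blockLabel ℓ (i - 1) + blockLabel ℓ i + blockLabel ℓ (i + 1) = 0 := by
  obtain ⟨z1, z2, z3⟩ := qw_zfacts hm i
  have z4 : i ≠ i + 1 := fun h => z1 h.symm
  have z5 : i ≠ i - 1 := fun h => z2 h.symm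
  have hF := hw (i, false)
  have hT := hw (i, true)
  rw [wt, qw_nbrTF s hm i false h1 h2,
    qw_sum4 ℓ _ _ _ _ (by simp [z3]) (by simp [z1]) (by simp [z3]) (by simp [z2])
      (by simp) (by simp [z5])] at hF
  rw [wt, qw_nbrTF s hm i true h1 h2,
    qw_sum4 ℓ _ _ _ _ (by simp [z3]) (by simp [z1]) (by simp [z3]) (by simp [z2])
      (by simp) (by simp [z5])] at hT
  simp only [blockLabel]
  simp only [Bool.not_false, Bool.not_true] at hF hT
  linarith

end QWAux

theorem stmt8 (m : ℕ) (s : ZMod m → Bool) (hv : qwValid m s)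
    (ℓ : ZMod m × Bool → ℤ) (hinj : Function.Injective ℓ)
    (hrange : Set.range ℓ = zeroLabels (2 * m))
    (hw : ∀ v, wt (qwGraph m s) ℓ v = 0)
    (k : ZMod m) (i j : ℕ) (hi : 1 ≤ i)
    (h1 : s (k - (i : ZMod m)) = false) (h2 : s (k + (j : ZMod m)) = false)
    (h3 : ∀ r : ℕ, 1 ≤ r → r < i + j → s (k - (i : ZMod m) + (r : ZMod m)) = true) :
    let a : ℤ := blockLabel ℓ (k - (i : ZMod m) + 1)
    let b : ℤ := blockLabel ℓ (k - (i : ZMod m) + 2)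
    (∀ r : ℕ, 1 ≤ r → r ≤ i + j →
      blockLabel ℓ (k - (i : ZMod m) + (r : ZMod m)) =
        if r % 4 = 0 then -b
        else if r % 4 = 1 then a
        else if r % 4 = 2 then b
        else -a) ∧
    blockLabel ℓ (k - (i : ZMod m)) = -a - 2 * b ∧
    blockLabel ℓ (k + (j : ZMod m) + 1) =
      (if (i + j) % 4 = 0 then 2 * a + b
       else if (i + j) % 4 = 1 then 2 * b - a
       else if (i + j) % 4 = 2 then -(2 * a) - b
       else -(2 * b) + a) := by
  intro a b
  have hm : 3 ≤ m := hv.1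
  have hvv := hv.2.2.2
  set P : ℕ → ZMod m := fun r => k - (i : ZMod m) + (r : ZMod m) with hP
  have hPsucc : ∀ r : ℕ, P (r + 1) = P r + 1 := by
    intro r; simp only [hP]; push_cast; ring
  have hP0 : P 0 = k - (i : ZMod m) := by simp [hP]
  have hPn : P (i + j) = k + (j : ZMod m) := by simp only [hP]; push_cast; ring
  have h3' : ∀ r : ℕ, 1 ≤ r → r < i + j → s (P r) = true := h3
  -- i + j ≥ 2
  have hij2 : 2 ≤ i + j := by
    by_contra hc
    have hij1 : i = 1 ∧ j = 0 := by omega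
    obtain ⟨hi1, hj0⟩ := hij1
    have e1 : s (P 0) = false := by rw [hP0]; exact h1
    have e2 : s (P 1) = false := by
      have : P 1 = k + ((j : ℕ) : ZMod m) := by
        simp only [hP, hi1, hj0]; push_cast; ring
      rw [this]; exact h2
    rcases hvv (P 0) with h | h
    · rw [e1] at h; exact absurd h (by simp)
    · rw [← hPsucc 0] at h; rw [e2] at h; exact absurd h (by simp)
  -- the pattern function
  set pat : ℕ → ℤ := fun r =>
    if r % 4 = 0 then -b else if r % 4 = 1 then a else if r % 4 = 2 then b else -a
    with hpat
  have pat_step : ∀ r : ℕ, pat (r + 2) = -pat r := by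
    intro r
    have h4 : r % 4 = 0 ∨ r % 4 = 1 ∨ r % 4 = 2 ∨ r % 4 = 3 := by omega
    rcases h4 with h | h | h | h <;>
      simp only [hpat] <;>
      rw [show (r + 2) % 4 = (r % 4 + 2) % 4 by omega, h] <;> norm_num
  have ha : blockLabel ℓ (P 1) = a := by
    simp only [hP]; norm_num; rfl
  have hb : blockLabel ℓ (P 2) = b := by
    simp only [hP]; norm_num; rfl
  -- main induction
  have key : ∀ r : ℕ, 1 ≤ r → r ≤ i + j → blockLabel ℓ (P r) = pat r := by
    intro r
    induction r using Nat.strong_induction_on with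
    | _ r IH =>
      intro hr1 hr2
      match r, hr1 with
      | 1, _ => rw [ha]; simp [hpat]
      | 2, _ => rw [hb]; simp [hpat]
      | (t + 3), _ =>
        have hs1 : s (P (t + 1)) = true := h3' (t + 1) (by omega) (by omega)
        have hs2 : s (P (t + 2)) = true := h3' (t + 2) (by omega) (by omega)
        have e1 : P (t + 2) - 1 = P (t + 1) := by rw [hPsucc (t + 1)]; ring
        have e2 : P (t + 2) + 1 = P (t + 3) := (hPsucc (t + 2)).symm
        have hrec := qw_recTT s hm ℓ hw (P (t + 2)) (by rw [e1]; exact hs1) hs2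
        rw [e1, e2] at hrec
        have hIH : blockLabel ℓ (P (t + 1)) = pat (t + 1) :=
          IH (t + 1) (by omega) (by omega) (by omega)
        rw [show t + 3 = (t + 1) + 2 by omega, pat_step (t + 1)]
        linarith
  refine ⟨?_, ?_, ?_⟩
  · intro r hr1 hr2
    exact key r hr1 hr2
  · -- blockLabel ℓ (P 0) = -a - 2b, via FT recursion at index P 1
    have hs1 : s (P 1) = true := h3' 1 le_rfl (by omega)
    have e1 : P 1 - 1 = P 0 := by rw [hPsucc 0]; ring
    have e2 : P 1 + 1 = P 2 := (hPsucc 1).symm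
    have hrec := qw_recFT s hm ℓ hw (P 1) (by rw [e1, hP0]; exact h1) hs1
    rw [e1, e2, ha, hb] at hrec
    rw [← hP0]
    linarith
  · -- blockLabel ℓ (P (i+j) + 1), via TF recursion at index P (i+j)
    set n := i + j with hn
    have hs1 : s (P (n - 1)) = true := h3' (n - 1) (by omega) (by omega)
    have e1 : P n - 1 = P (n - 1) := by
      rw [show P n = P (n - 1) + 1 from by rw [← hPsucc]; congr 1; omega]; ring
    have hrec := qw_recTF s hm ℓ hw (P n) (by rw [e1]; exact hs1) (by rw [hPn]; exact h2)
    rw [e1] at hrec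
    have hv1 : blockLabel ℓ (P (n - 1)) = pat (n - 1) := key (n - 1) (by omega) (by omega)
    have hv2 : blockLabel ℓ (P n) = pat n := key n (by omega) (by omega)
    rw [hv1, hv2] at hrec
    rw [show k + (j : ZMod m) + 1 = P n + 1 by rw [hPn]]
    simp only [hpat] at hrec
    have h4 : n % 4 = 0 ∨ n % 4 = 1 ∨ n % 4 = 2 ∨ n % 4 = 3 := by omega
    rcases h4 with h | h | h | h
    · rw [show (n - 1) % 4 = 3 by omega] at hrec
      rw [if_pos h]
      simp only [h] at hrec
      norm_num at hrec
      linarith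
    · rw [show (n - 1) % 4 = 0 by omega] at hrec
      rw [if_neg (by omega), if_pos h]
      simp only [h] at hrec
      norm_num at hrec
      linarith
    · rw [show (n - 1) % 4 = 1 by omega] at hrec
      rw [if_neg (by omega), if_neg (by omega), if_pos h]
      simp only [h] at hrec
      norm_num at hrec
      linarith
    · rw [show (n - 1) % 4 = 2 by omega] at hrec
      rw [if_neg (by omega), if_neg (by omega), if_neg (by omega)]
      simp only [h] at hrec
      norm_num at hrec
      linarith
end

section
/- If a quasi wreath graph QW(S) is distance magic, then every segment of QW(S) has odd length; in fact every segment has length congruent to 1 or 3 modulo 4, and the number of segments of length congruent to 1 modulo 4 is even. -/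
lemma wt_eq_four {V : Type*} [DecidableEq V] (G : SimpleGraph V) (ℓ : V → ℤ) (v a b c d : V)
    (hset : {u | G.Adj v u} = {a, b, c, d})
    (hab : a ≠ b) (hac : a ≠ c) (had : a ≠ d) (hbc : b ≠ c) (hbd : b ≠ d) (hcd : c ≠ d) :
    wt G ℓ v = ℓ a + ℓ b + ℓ c + ℓ d := by
  unfold wt
  rw [hset]
  have h : ({a, b, c, d} : Set V) = (({a, b, c, d} : Finset V) : Set V) := by simp
  rw [h, finsum_mem_coe_finset]
  rw [Finset.sum_insert (by simp [hab, hac, had]), Finset.sum_insert (by simp [hbc, hbd]),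
    Finset.sum_insert (by simp [hcd]), Finset.sum_singleton]
  ring



lemma zmone_ne (m : ℕ) (hm : 3 ≤ m) : (1 : ZMod m) ≠ 0 := by
  intro h
  have h2 : (m : ℕ) ∣ 1 := (ZMod.natCast_eq_zero_iff 1 m).mp (by exact_mod_cast h)
  have := Nat.le_of_dvd one_pos h2
  omega

lemma zmtwo_ne (m : ℕ) (hm : 3 ≤ m) : (2 : ZMod m) ≠ 0 := by
  intro h
  have h2 : (m : ℕ) ∣ 2 := (ZMod.natCast_eq_zero_iff 2 m).mp (by exact_mod_cast h)
  have := Nat.le_of_dvd two_pos h2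
  omega

section nbhd
variable {m : ℕ} (s : ZMod m → Bool) (k : ZMod m)

lemma nx10 (hm : 3 ≤ m) (h1 : s (k - 1) = true) (h2 : s k = false) :
    {u | (qwGraph m s).Adj (k, false) u} =
      {(k - 1, false), (k + 1, false), (k, true), (k - 1, true)} := by
  have e1 : k - 1 + 1 = k := by ring
  have hA : k + 1 ≠ k := fun h => zmone_ne m hm (by linear_combination h)
  have hB : k - 1 ≠ k := fun h => zmone_ne m hm (by linear_combination -h)
  have hC : k - 1 ≠ k + 1 := fun h => zmtwo_ne m hm (by linear_combination -h)
  ext ⟨j, b⟩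
  show ((k, false) ≠ (j, b) ∧ (qwBase s (k, false) (j, b) ∨ qwBase s (j, b) (k, false))) ↔ _
  simp only [qwBase, Set.mem_insert_iff, Set.mem_singleton_iff, Prod.mk.injEq, ne_eq, Prod.ext_iff]
  constructor
  · rintro ⟨hne, h | h⟩ <;>
      rcases h with ⟨hb, hj⟩ | ⟨hb, hj, hs⟩ | ⟨hb, hj, hs⟩ <;>
      cases b <;> simp_all
  · rintro (⟨hj, hb⟩ | ⟨hj, hb⟩ | ⟨hj, hb⟩ | ⟨hj, hb⟩) <;> subst hj <;> subst hb <;>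
      refine ⟨by simp [hA.symm, hB.symm], ?_⟩ <;>
      simp [e1, h1, h2, hA, hB, hC] <;> tauto

lemma nx01 (hm : 3 ≤ m) (h1 : s (k - 1) = false) (h2 : s k = true) :
    {u | (qwGraph m s).Adj (k, false) u} =
      {(k - 1, false), (k + 1, false), (k, true), (k + 1, true)} := by
  have e1 : k - 1 + 1 = k := by ring
  have hA : k + 1 ≠ k := fun h => zmone_ne m hm (by linear_combination h)
  have hB : k - 1 ≠ k := fun h => zmone_ne m hm (by linear_combination -h)
  have hC : k - 1 ≠ k + 1 := fun h => zmtwo_ne m hm (by linear_combination -h)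
  ext ⟨j, b⟩
  show ((k, false) ≠ (j, b) ∧ (qwBase s (k, false) (j, b) ∨ qwBase s (j, b) (k, false))) ↔ _
  simp only [qwBase, Set.mem_insert_iff, Set.mem_singleton_iff, Prod.mk.injEq, ne_eq, Prod.ext_iff]
  constructor
  · rintro ⟨hne, h | h⟩ <;>
      rcases h with ⟨hb, hj⟩ | ⟨hb, hj, hs⟩ | ⟨hb, hj, hs⟩ <;>
      cases b <;> simp_all
  · rintro (⟨hj, hb⟩ | ⟨hj, hb⟩ | ⟨hj, hb⟩ | ⟨hj, hb⟩) <;> subst hj <;> subst hb <;>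
      refine ⟨by simp [hA.symm, hB.symm], ?_⟩ <;>
      simp [e1, h1, h2, hA, hB, hC] <;> tauto

lemma nx11 (hm : 3 ≤ m) (h1 : s (k - 1) = true) (h2 : s k = true) :
    {u | (qwGraph m s).Adj (k, false) u} =
      {(k - 1, false), (k + 1, false), (k - 1, true), (k + 1, true)} := by
  have e1 : k - 1 + 1 = k := by ring
  have hA : k + 1 ≠ k := fun h => zmone_ne m hm (by linear_combination h)
  have hB : k - 1 ≠ k := fun h => zmone_ne m hm (by linear_combination -h)
  have hC : k - 1 ≠ k + 1 := fun h => zmtwo_ne m hm (by linear_combination -h)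
  ext ⟨j, b⟩
  show ((k, false) ≠ (j, b) ∧ (qwBase s (k, false) (j, b) ∨ qwBase s (j, b) (k, false))) ↔ _
  simp only [qwBase, Set.mem_insert_iff, Set.mem_singleton_iff, Prod.mk.injEq, ne_eq, Prod.ext_iff]
  constructor
  · rintro ⟨hne, h | h⟩ <;>
      rcases h with ⟨hb, hj⟩ | ⟨hb, hj, hs⟩ | ⟨hb, hj, hs⟩ <;>
      cases b <;> simp_all
  · rintro (⟨hj, hb⟩ | ⟨hj, hb⟩ | ⟨hj, hb⟩ | ⟨hj, hb⟩) <;> subst hj <;> subst hb <;>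
      refine ⟨by simp [hA.symm, hB.symm], ?_⟩ <;>
      simp [e1, h1, h2, hA, hB, hC] <;> tauto

lemma ny10 (hm : 3 ≤ m) (h1 : s (k - 1) = true) (h2 : s k = false) :
    {u | (qwGraph m s).Adj (k, true) u} =
      {(k - 1, true), (k + 1, true), (k, false), (k - 1, false)} := by
  have e1 : k - 1 + 1 = k := by ring
  have hA : k + 1 ≠ k := fun h => zmone_ne m hm (by linear_combination h)
  have hB : k - 1 ≠ k := fun h => zmone_ne m hm (by linear_combination -h)
  have hC : k - 1 ≠ k + 1 := fun h => zmtwo_ne m hm (by linear_combination -h)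
  ext ⟨j, b⟩
  show ((k, true) ≠ (j, b) ∧ (qwBase s (k, true) (j, b) ∨ qwBase s (j, b) (k, true))) ↔ _
  simp only [qwBase, Set.mem_insert_iff, Set.mem_singleton_iff, Prod.mk.injEq, ne_eq, Prod.ext_iff]
  constructor
  · rintro ⟨hne, h | h⟩ <;>
      rcases h with ⟨hb, hj⟩ | ⟨hb, hj, hs⟩ | ⟨hb, hj, hs⟩ <;>
      cases b <;> simp_all
  · rintro (⟨hj, hb⟩ | ⟨hj, hb⟩ | ⟨hj, hb⟩ | ⟨hj, hb⟩) <;> subst hj <;> subst hb <;>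
      refine ⟨by simp [hA.symm, hB.symm], ?_⟩ <;>
      simp [e1, h1, h2, hA, hB, hC] <;> tauto

lemma ny01 (hm : 3 ≤ m) (h1 : s (k - 1) = false) (h2 : s k = true) :
    {u | (qwGraph m s).Adj (k, true) u} =
      {(k - 1, true), (k + 1, true), (k, false), (k + 1, false)} := by
  have e1 : k - 1 + 1 = k := by ring
  have hA : k + 1 ≠ k := fun h => zmone_ne m hm (by linear_combination h)
  have hB : k - 1 ≠ k := fun h => zmone_ne m hm (by linear_combination -h)
  have hC : k - 1 ≠ k + 1 := fun h => zmtwo_ne m hm (by linear_combination -h)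
  ext ⟨j, b⟩
  show ((k, true) ≠ (j, b) ∧ (qwBase s (k, true) (j, b) ∨ qwBase s (j, b) (k, true))) ↔ _
  simp only [qwBase, Set.mem_insert_iff, Set.mem_singleton_iff, Prod.mk.injEq, ne_eq, Prod.ext_iff]
  constructor
  · rintro ⟨hne, h | h⟩ <;>
      rcases h with ⟨hb, hj⟩ | ⟨hb, hj, hs⟩ | ⟨hb, hj, hs⟩ <;>
      cases b <;> simp_all
  · rintro (⟨hj, hb⟩ | ⟨hj, hb⟩ | ⟨hj, hb⟩ | ⟨hj, hb⟩) <;> subst hj <;> subst hb <;>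
      refine ⟨by simp [hA.symm, hB.symm], ?_⟩ <;>
      simp [e1, h1, h2, hA, hB, hC] <;> tauto

lemma ny11 (hm : 3 ≤ m) (h1 : s (k - 1) = true) (h2 : s k = true) :
    {u | (qwGraph m s).Adj (k, true) u} =
      {(k - 1, true), (k + 1, true), (k - 1, false), (k + 1, false)} := by
  have e1 : k - 1 + 1 = k := by ring
  have hA : k + 1 ≠ k := fun h => zmone_ne m hm (by linear_combination h)
  have hB : k - 1 ≠ k := fun h => zmone_ne m hm (by linear_combination -h)
  have hC : k - 1 ≠ k + 1 := fun h => zmtwo_ne m hm (by linear_combination -h)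
  ext ⟨j, b⟩
  show ((k, true) ≠ (j, b) ∧ (qwBase s (k, true) (j, b) ∨ qwBase s (j, b) (k, true))) ↔ _
  simp only [qwBase, Set.mem_insert_iff, Set.mem_singleton_iff, Prod.mk.injEq, ne_eq, Prod.ext_iff]
  constructor
  · rintro ⟨hne, h | h⟩ <;>
      rcases h with ⟨hb, hj⟩ | ⟨hb, hj, hs⟩ | ⟨hb, hj, hs⟩ <;>
      cases b <;> simp_all
  · rintro (⟨hj, hb⟩ | ⟨hj, hb⟩ | ⟨hj, hb⟩ | ⟨hj, hb⟩) <;> subst hj <;> subst hb <;>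
      refine ⟨by simp [hA.symm, hB.symm], ?_⟩ <;>
      simp [e1, h1, h2, hA, hB, hC] <;> tauto

end nbhd


section eqs
variable {m : ℕ} (s : ZMod m → Bool) (ℓ : ZMod m × Bool → ℤ)

-- distinctness helpers
lemma dist4 {k a b : ZMod m} (hm : 3 ≤ m) : ((k:ZMod m), false) ≠ (k, true) := by simp

lemma e11 (hm : 3 ≤ m) (hw : ∀ v, wt (qwGraph m s) ℓ v = 0) (k : ZMod m)
    (h1 : s (k - 1) = true) (h2 : s k = true) :
    blockLabel ℓ (k - 1) + blockLabel ℓ (k + 1) = 0 := by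
  have hA : k + 1 ≠ k := fun h => zmone_ne m hm (by linear_combination h)
  have hB : k - 1 ≠ k := fun h => zmone_ne m hm (by linear_combination -h)
  have hC : k - 1 ≠ k + 1 := fun h => zmtwo_ne m hm (by linear_combination -h)
  have h := hw (k, false)
  rw [wt_eq_four (qwGraph m s) ℓ (k, false) (k-1, false) (k+1, false) (k-1, true) (k+1, true)
    (nx11 s k hm h1 h2) (by simp [hC]) (by simp) (by simp) (by simp) (by simp) (by simp [hC])] at h
  simp only [blockLabel]
  linarith

lemma e10sum (hm : 3 ≤ m) (hw : ∀ v, wt (qwGraph m s) ℓ v = 0) (k : ZMod m)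
    (h1 : s (k - 1) = true) (h2 : s k = false) :
    2 * blockLabel ℓ (k - 1) + blockLabel ℓ k + blockLabel ℓ (k + 1) = 0 := by
  have hA : k + 1 ≠ k := fun h => zmone_ne m hm (by linear_combination h)
  have hB : k - 1 ≠ k := fun h => zmone_ne m hm (by linear_combination -h)
  have hC : k - 1 ≠ k + 1 := fun h => zmtwo_ne m hm (by linear_combination -h)
  have hx := hw (k, false)
  have hy := hw (k, true)
  rw [wt_eq_four (qwGraph m s) ℓ (k, false) (k-1, false) (k+1, false) (k, true) (k-1, true)
    (nx10 s k hm h1 h2) (by simp [hC]) (by simp [hB]) (by simp) (by simp) (by simp [hC])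
    (by simp [hB.symm])] at hx
  rw [wt_eq_four (qwGraph m s) ℓ (k, true) (k-1, true) (k+1, true) (k, false) (k-1, false)
    (ny10 s k hm h1 h2) (by simp [hC]) (by simp [hB]) (by simp) (by simp) (by simp [hC])
    (by simp [hB.symm])] at hy
  simp only [blockLabel]
  linarith

lemma e10diff (hm : 3 ≤ m) (hw : ∀ v, wt (qwGraph m s) ℓ v = 0) (k : ZMod m)
    (h1 : s (k - 1) = true) (h2 : s k = false) :
    ℓ (k+1, false) - ℓ (k+1, true) = ℓ (k, false) - ℓ (k, true) := by
  have hA : k + 1 ≠ k := fun h => zmone_ne m hm (by linear_combination h)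
  have hB : k - 1 ≠ k := fun h => zmone_ne m hm (by linear_combination -h)
  have hC : k - 1 ≠ k + 1 := fun h => zmtwo_ne m hm (by linear_combination -h)
  have hx := hw (k, false)
  have hy := hw (k, true)
  rw [wt_eq_four (qwGraph m s) ℓ (k, false) (k-1, false) (k+1, false) (k, true) (k-1, true)
    (nx10 s k hm h1 h2) (by simp [hC]) (by simp [hB]) (by simp) (by simp) (by simp [hC])
    (by simp [hB.symm])] at hx
  rw [wt_eq_four (qwGraph m s) ℓ (k, true) (k-1, true) (k+1, true) (k, false) (k-1, false)
    (ny10 s k hm h1 h2) (by simp [hC]) (by simp [hB]) (by simp) (by simp) (by simp [hC])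
    (by simp [hB.symm])] at hy
  linarith

lemma e01sum (hm : 3 ≤ m) (hw : ∀ v, wt (qwGraph m s) ℓ v = 0) (k : ZMod m)
    (h1 : s (k - 1) = false) (h2 : s k = true) :
    blockLabel ℓ (k - 1) + blockLabel ℓ k + 2 * blockLabel ℓ (k + 1) = 0 := by
  have hA : k + 1 ≠ k := fun h => zmone_ne m hm (by linear_combination h)
  have hA' : k ≠ k + 1 := fun h => hA h.symm
  have hB : k - 1 ≠ k := fun h => zmone_ne m hm (by linear_combination -h)
  have hC : k - 1 ≠ k + 1 := fun h => zmtwo_ne m hm (by linear_combination -h)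
  have hx := hw (k, false)
  have hy := hw (k, true)
  rw [wt_eq_four (qwGraph m s) ℓ (k, false) (k-1, false) (k+1, false) (k, true) (k+1, true)
    (nx01 s k hm h1 h2) (by simp [hC]) (by simp [hB]) (by simp [hC]) (by simp) (by simp)
    (by simp [hA'])] at hx
  rw [wt_eq_four (qwGraph m s) ℓ (k, true) (k-1, true) (k+1, true) (k, false) (k+1, false)
    (ny01 s k hm h1 h2) (by simp [hC]) (by simp [hB]) (by simp [hC]) (by simp) (by simp)
    (by simp [hA'])] at hy
  simp only [blockLabel]
  linarith

end eqs



section walkSec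
variable {m : ℕ}

/-- `S` lifted to ℕ. -/
def Sb (s : ZMod m → Bool) (n : ℕ) : Bool := s (n : ZMod m)

def ccv (ℓ : ZMod m × Bool → ℤ) (n : ℕ) : ℤ :=
  blockLabel ℓ ((n : ZMod m) + 1) + blockLabel ℓ ((n : ZMod m) - 1)

def ddv (ℓ : ZMod m × Bool → ℤ) (n : ℕ) : ℤ := -blockLabel ℓ ((n : ZMod m) - 1)

variable {s : ZMod m → Bool} {ℓ : ZMod m × Bool → ℤ}

lemma sPrev (hv : qwValid m s) {k : ZMod m} (h : s k = false) : s (k - 1) = true := by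
  rcases hv.2.2.2 (k - 1) with h' | h'
  · exact h'
  · rw [sub_add_cancel] at h'; rw [h'] at h; cases h

lemma sbNext (hv : qwValid m s) {n : ℕ} (h : Sb s n = false) : Sb s (n + 1) = true := by
  rcases hv.2.2.2 (n : ZMod m) with h' | h'
  · rw [Sb] at h; rw [h'] at h; cases h
  · unfold Sb; push_cast; exact h'

lemma czero (hv : qwValid m s) (hinj : Function.Injective ℓ)
    (hw : ∀ v, wt (qwGraph m s) ℓ v = 0) {n : ℕ} (h : Sb s n = false) :
    ccv ℓ n ≠ 0 := by
  intro hc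
  set k : ZMod m := (n : ZMod m) with hk
  have hm := hv.1
  have h1 : s (k - 1) = true := sPrev hv h
  have hsum := e10sum s ℓ hm hw k h1 h
  have hdiff := e10diff s ℓ hm hw k h1 h
  unfold ccv at hc
  -- block k = block (k+1)
  have hbl : blockLabel ℓ k = blockLabel ℓ (k + 1) := by
    simp only [blockLabel] at *; linarith
  have hx : ℓ (k, false) = ℓ (k + 1, false) := by
    simp only [blockLabel] at hbl; linarith
  have := hinj hx
  have h10 : (1 : ZMod m) = 0 := by
    have : k = k + 1 := congrArg Prod.fst this
    linear_combination -this
  exact zmone_ne m hm h10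


/-- sign of a segment of length `j` -/
def sg (j : ℕ) : ℤ := if j % 4 = 1 ∨ j % 4 = 2 then -1 else 1

lemma sg_cases (j : ℕ) : sg j = 1 ∨ sg j = -1 := by
  unfold sg; split <;> simp

lemma sg_odd {j : ℕ} (h : Odd j) : sg j = -(-1 : ℤ) ^ ((j - 1) / 2) := by
  rw [Nat.odd_iff] at h
  have h4 : j % 4 = 1 ∨ j % 4 = 3 := by omega
  unfold sg
  rcases h4 with h4 | h4
  · have he : Even ((j - 1) / 2) := by rw [Nat.even_iff]; omega
    rw [he.neg_one_pow]; simp [h4]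
  · have ho : Odd ((j - 1) / 2) := by rw [Nat.odd_iff]; omega
    rw [ho.neg_one_pow]; simp [h4]

lemma sg_even {j : ℕ} (h : Even j) : sg j = (-1 : ℤ) ^ (j / 2) := by
  rw [Nat.even_iff] at h
  have h4 : j % 4 = 0 ∨ j % 4 = 2 := by omega
  unfold sg
  rcases h4 with h4 | h4
  · have he : Even (j / 2) := by rw [Nat.even_iff]; omega
    rw [he.neg_one_pow]; simp [h4]
  · have ho : Odd (j / 2) := by rw [Nat.odd_iff]; omega
    rw [ho.neg_one_pow]; simp [h4]

lemma stepLemma (hv : qwValid m s) (hw : ∀ v, wt (qwGraph m s) ℓ v = 0)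
    (n j : ℕ) (h0 : Sb s n = false) (hj : Sb s (n + j) = false)
    (hmin : ∀ r, 1 ≤ r → r < j → Sb s (n + r) = true) (h2j : 2 ≤ j) :
    (Odd j → ccv ℓ (n + j) = sg j * (ccv ℓ n + 2 * ddv ℓ n) ∧ ddv ℓ (n + j) = sg j * ddv ℓ n) ∧
    (Even j → ccv ℓ (n + j) = sg j * ccv ℓ n ∧ ddv ℓ (n + j) = sg j * (ccv ℓ n + ddv ℓ n)) := by
  have hm := hv.1
  set N : ZMod m := (n : ZMod m) with hN
  set A : ℤ := blockLabel ℓ (N + 1) with hA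
  set B : ℤ := blockLabel ℓ (N - 1) with hB
  set G : ℕ → ℤ := fun k => if k % 2 = 1 then (-1 : ℤ) ^ ((k - 1) / 2) * A
    else (-1 : ℤ) ^ (k / 2 + 1) * B with hG
  have h0' : s N = false := h0
  have hprev : s (N - 1) = true := sPrev hv h0'
  -- the in-segment values
  have claim : ∀ k, k ≤ j → 1 ≤ k → blockLabel ℓ (N + (k : ℕ)) = G k := by
    intro k
    induction k using Nat.strong_induction_on with
    | _ k ih =>
      intro hkj hk1
      rcases eq_or_lt_of_le hk1 with h1 | hk2
      · -- k = 1
        rw [← h1]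
        simp only [hG, Nat.cast_one]
        norm_num
        exact hA.symm
      rcases eq_or_lt_of_le (show 2 ≤ k from hk2) with h2 | hk3
      · -- k = 2
        rw [← h2]
        have hs1 : s (N + 1) = true := by
          have := hmin 1 le_rfl (by omega)
          unfold Sb at this; push_cast at this; exact this
        have he10 := e10sum s ℓ hm hw N hprev h0'
        have he01 := e01sum s ℓ hm hw (N + 1) (by rwa [add_sub_cancel_right]) hs1
        rw [add_sub_cancel_right] at he01
        have : blockLabel ℓ (N + 1 + 1) = B := by rw [hB]; linarith
        simp only [hG]
        norm_num
        rw [← this]; congr 1; push_cast; ring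
      · -- 3 ≤ k
        have hk3' : 3 ≤ k := hk3
        have hs1 : s (N + ((k - 1 : ℕ) : ZMod m)) = true := by
          have h := hmin (k - 1) (by omega) (by omega)
          unfold Sb at h
          rwa [show ((n + (k - 1) : ℕ) : ZMod m) = N + ((k - 1 : ℕ) : ZMod m) by
            push_cast; ring] at h
        have hs2 : s (N + ((k - 2 : ℕ) : ZMod m)) = true := by
          have h := hmin (k - 2) (by omega) (by omega)
          unfold Sb at h
          rwa [show ((n + (k - 2) : ℕ) : ZMod m) = N + ((k - 2 : ℕ) : ZMod m) by
            push_cast; ring] at h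
        have c1 : ((k - 1 : ℕ) : ZMod m) = ((k - 2 : ℕ) : ZMod m) + 1 := by
          have : k - 1 = (k - 2) + 1 := by omega
          rw [this]; push_cast; ring
        have c2 : ((k : ℕ) : ZMod m) = ((k - 2 : ℕ) : ZMod m) + 2 := by
          have : k = (k - 2) + 2 := by omega
          nth_rewrite 1 [this]; push_cast; ring
        have harg : N + ((k - 1 : ℕ) : ZMod m) - 1 = N + ((k - 2 : ℕ) : ZMod m) := by
          rw [c1]; ring
        have he11 := e11 s ℓ hm hw (N + ((k - 1 : ℕ) : ZMod m))
          (by rwa [harg]) hs1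
        rw [harg] at he11
        have harg2 : N + ((k - 1 : ℕ) : ZMod m) + 1 = N + ((k : ℕ) : ZMod m) := by
          rw [c1, c2]; ring
        rw [harg2] at he11
        have hIH := ih (k - 2) (by omega) (by omega) (by omega)
        have hval : blockLabel ℓ (N + (k : ℕ)) = -G (k - 2) := by rw [← hIH]; linarith
        rw [hval]
        -- sign identity : -G (k-2) = G k
        simp only [hG]
        rcases Nat.even_or_odd k with he | ho
        · have e0 : k % 2 = 0 := Nat.even_iff.mp he
          have e1 : (k - 2) % 2 = 0 := by omega
          simp only [e0, e1]
          norm_num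
          have : k / 2 + 1 = ((k - 2) / 2 + 1) + 1 := by omega
          rw [this, pow_succ]; ring
        · have e0 : k % 2 = 1 := Nat.odd_iff.mp ho
          have e1 : (k - 2) % 2 = 1 := by omega
          simp only [e0, e1]
          norm_num
          have : (k - 1) / 2 = ((k - 2 - 1) / 2) + 1 := by omega
          rw [this, pow_succ]; ring
  -- endgame
  have hGj := claim j le_rfl (by omega)
  have hGj1 := claim (j - 1) (by omega) (by omega)
  have hcast1 : ((n + j : ℕ) : ZMod m) = N + (j : ℕ) := by push_cast; ring
  have hcastm1 : N + ((j : ℕ) : ZMod m) - 1 = N + ((j - 1 : ℕ) : ZMod m) := by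
    push_cast [Nat.cast_sub (by omega : 1 ≤ j)]; ring
  have hsj1 : s (N + ((j : ℕ) : ZMod m) - 1) = true := by
    rw [hcastm1]
    have h := hmin (j - 1) (by omega) (by omega)
    unfold Sb at h
    rwa [show ((n + (j - 1) : ℕ) : ZMod m) = N + ((j - 1 : ℕ) : ZMod m) by
      push_cast; ring] at h
  have hsj : s (N + ((j : ℕ) : ZMod m)) = false := by
    have : Sb s (n + j) = false := hj
    unfold Sb at this; rwa [hcast1] at this
  have he10 := e10sum s ℓ hm hw (N + (j : ℕ)) hsj1 hsj
  rw [hcastm1] at he10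
  have hccv : ccv ℓ (n + j) = -G (j - 1) - G j := by
    unfold ccv
    rw [hcast1, hcastm1, hGj1]
    have : blockLabel ℓ (N + ((j : ℕ) : ZMod m) + 1) = -2 * G (j - 1) - G j := by
      rw [← hGj1, ← hGj]; linarith
    rw [this]; ring
  have hddv : ddv ℓ (n + j) = -G (j - 1) := by
    unfold ddv
    rw [hcast1, hcastm1, hGj1]
  have hccv0 : ccv ℓ n = A + B := by unfold ccv; rw [← hN, ← hA, ← hB]
  have hddv0 : ddv ℓ n = -B := by unfold ddv; rw [← hN, ← hB]
  constructor
  · intro hodd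
    have e0 : j % 2 = 1 := Nat.odd_iff.mp hodd
    have e1 : (j - 1) % 2 = 0 := by omega
    have hsg := sg_odd hodd
    set p : ℤ := (-1 : ℤ) ^ ((j - 1) / 2) with hp
    have hGjv : G j = p * A := by simp only [hG, e0]; norm_num; exact Or.inl hp.symm
    have hGj1v : G (j - 1) = -p * B := by
      simp only [hG, e1]
      norm_num
      rw [pow_succ]
      ring
    constructor
    · rw [hccv, hccv0, hddv0, hGjv, hGj1v, hsg]; ring
    · rw [hddv, hddv0, hGj1v, hsg]; ring
  · intro heven
    have e0 : j % 2 = 0 := Nat.even_iff.mp heven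
    have e1 : (j - 1) % 2 = 1 := by omega
    have hsg := sg_even heven
    set q : ℤ := (-1 : ℤ) ^ (j / 2) with hq
    have hGjv : G j = -q * B := by
      simp only [hG, e0]
      norm_num
      rw [pow_succ]; ring
    have hGj1v : G (j - 1) = -q * A := by
      simp only [hG, e1]
      norm_num
      have : j / 2 = (j - 1 - 1) / 2 + 1 := by omega
      rw [hq, this, pow_succ]; ring
    constructor
    · rw [hccv, hccv0, hGjv, hGj1v, hsg]; ring
    · rw [hddv, hccv0, hddv0, hGj1v, hsg]; ring


lemma gap_ex (hv : qwValid m s) (n : ℕ) : ∃ j, 0 < j ∧ Sb s (n + j) = false := by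
  have hm : 0 < m := by have := hv.1; omega
  refine ⟨m - n % m, by have := Nat.mod_lt n hm; omega, ?_⟩
  unfold Sb
  have he : n + (m - n % m) = m * (n / m + 1) := by
    have h1 := Nat.div_add_mod n m
    have h2 := Nat.mod_lt n hm
    have h3 : m * (n / m + 1) = m * (n / m) + m := Nat.mul_succ m (n / m)
    omega
  rw [he]
  have : ((m * (n / m + 1) : ℕ) : ZMod m) = 0 := by
    push_cast [ZMod.natCast_self]
    ring
  rw [this]
  exact hv.2.1

noncomputable def gap (hv : qwValid m s) (n : ℕ) : ℕ := Nat.find (gap_ex hv n)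

lemma gap_pos (hv : qwValid m s) (n : ℕ) : 0 < gap hv n := (Nat.find_spec (gap_ex hv n)).1

lemma gap_zero (hv : qwValid m s) (n : ℕ) : Sb s (n + gap hv n) = false :=
  (Nat.find_spec (gap_ex hv n)).2

lemma gap_min (hv : qwValid m s) (n : ℕ) {r : ℕ} (h1 : 1 ≤ r) (h2 : r < gap hv n) :
    Sb s (n + r) = true := by
  have := Nat.find_min (gap_ex hv n) h2
  simp only [not_and_or, not_lt] at this
  rcases this with h | h
  · omega
  · simp only [Bool.not_eq_false] at h; exact h

lemma gap_le (hv : qwValid m s) (n : ℕ) {j : ℕ} (h1 : 0 < j) (h2 : Sb s (n + j) = false) :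
    gap hv n ≤ j := Nat.find_le ⟨h1, h2⟩

lemma gap_two (hv : qwValid m s) {n : ℕ} (h : Sb s n = false) : 2 ≤ gap hv n := by
  have h1 := gap_pos hv n
  rcases Nat.lt_or_ge (gap hv n) 2 with h2 | h2
  · exfalso
    have hg1 : gap hv n = 1 := by omega
    have := gap_zero hv n
    rw [hg1, sbNext hv h] at this
    cases this
  · exact h2

lemma gap_eq_of_isSegment (hv : qwValid m s) {n j : ℕ} (hseg : IsSegment s ((n : ZMod m)) j) :
    gap hv n = j := by
  obtain ⟨hs0, hj1, hjz, hjmin⟩ := hseg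
  have hle : gap hv n ≤ j := by
    apply gap_le hv n (by omega)
    unfold Sb; push_cast; exact hjz
  rcases eq_or_lt_of_le hle with h | h
  · exact h
  · exfalso
    have h1 := gap_pos hv n
    have := hjmin (gap hv n) (by omega) h
    have h2 := gap_zero hv n
    unfold Sb at h2; push_cast at h2
    rw [this] at h2; cases h2

noncomputable def walk (hv : qwValid m s) (n₀ : ℕ) : ℕ → ℕ
  | 0 => n₀
  | r + 1 => walk hv n₀ r + gap hv (walk hv n₀ r)

noncomputable def sigma (hv : qwValid m s) (n₀ r : ℕ) : ℤ :=
  ∏ r' ∈ Finset.range r, sg (gap hv (walk hv n₀ r'))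

lemma sigma_cases (hv : qwValid m s) (n₀ r : ℕ) : sigma hv n₀ r = 1 ∨ sigma hv n₀ r = -1 := by
  induction r with
  | zero => left; simp [sigma]
  | succ r ih =>
    unfold sigma
    rw [Finset.prod_range_succ]
    rcases ih with h | h <;> rcases sg_cases (gap hv (walk hv n₀ r)) with h2 | h2 <;>
      unfold sigma at h <;> rw [h, h2] <;> simp

lemma walk_false (hv : qwValid m s) {n₀ : ℕ} (h0 : Sb s n₀ = false) (r : ℕ) :
    Sb s (walk hv n₀ r) = false := by
  induction r with
  | zero => exact h0
  | succ r ih => exact gap_zero hv (walk hv n₀ r)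

lemma walk_mono (hv : qwValid m s) (n₀ : ℕ) : StrictMono (walk hv n₀) := by
  apply strictMono_nat_of_lt_succ
  intro r
  have := gap_pos hv (walk hv n₀ r)
  show walk hv n₀ r < walk hv n₀ r + _
  omega

lemma walk_grow (hv : qwValid m s) {n₀ : ℕ} (h0 : Sb s n₀ = false) (r : ℕ) :
    n₀ + 2 * r ≤ walk hv n₀ r := by
  induction r with
  | zero => simp [walk]
  | succ r ih =>
    have := gap_two hv (walk_false hv h0 r)
    show _ ≤ walk hv n₀ r + _
    omega

lemma sb_add_m (hv : qwValid m s) (n : ℕ) : Sb s (n + m) = Sb s n := by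
  unfold Sb; push_cast [ZMod.natCast_self]; ring_nf

lemma walk_bounded (hv : qwValid m s) {n₀ : ℕ} (h0 : Sb s n₀ = false) :
    ∀ r, (∀ r' , r' < r → walk hv n₀ r' < n₀ + m) → walk hv n₀ r ≤ n₀ + m := by
  intro r
  induction r with
  | zero => intro _; show n₀ ≤ n₀ + m; omega
  | succ r ih =>
    intro hall
    have hr : walk hv n₀ r < n₀ + m := hall r (by omega)
    have hgle : gap hv (walk hv n₀ r) ≤ n₀ + m - walk hv n₀ r := by
      apply gap_le hv _ (by omega)
      have : walk hv n₀ r + (n₀ + m - walk hv n₀ r) = n₀ + m := by omega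
      rw [this, sb_add_m hv]
      exact h0
    show walk hv n₀ r + _ ≤ _
    omega

lemma walk_hit (hv : qwValid m s) {n₀ : ℕ} (h0 : Sb s n₀ = false) :
    ∃ t, 0 < t ∧ walk hv n₀ t = n₀ + m ∧ ∀ r, r < t → walk hv n₀ r < n₀ + m := by
  have hm : 3 ≤ m := hv.1
  have hex : ∃ r, n₀ + m ≤ walk hv n₀ r := ⟨m, by have := walk_grow hv h0 m; omega⟩
  set t := Nat.find hex with ht
  have hts := Nat.find_spec hex
  rw [← ht] at hts
  have htmin : ∀ r, r < t → walk hv n₀ r < n₀ + m := by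
    intro r hr
    have := Nat.find_min hex hr
    omega
  have ht0 : 0 < t := by
    rcases Nat.eq_zero_or_pos t with h | h
    · exfalso; rw [h] at hts; show False
      have : walk hv n₀ 0 = n₀ := rfl
      rw [this] at hts; omega
    · exact h
  refine ⟨t, ht0, ?_, htmin⟩
  have := walk_bounded hv h0 t htmin
  omega

lemma contraNeg (C D w11 w12 w21 w22 : ℤ)
    (h11 : 1 ≤ w11) (h12 : 0 ≤ w12) (h21 : 0 ≤ w21) (h22 : 1 ≤ w22)
    (hdet : w11 * w22 - w12 * w21 = 1)
    (hC : C = -1 * (w11 * C + w12 * D)) (hD : D = -1 * (w21 * C + w22 * D)) : C = 0 := by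
  have e1 : (w11 + 1) * C + w12 * D = 0 := by linarith
  have e2 : w21 * C + (w22 + 1) * D = 0 := by linarith
  have key : C * ((w11 + 1) * (w22 + 1) - w12 * w21) = 0 := by
    linear_combination (w22 + 1) * e1 - w12 * e2
  have hval : (w11 + 1) * (w22 + 1) - w12 * w21 = w11 + w22 + 2 := by
    linear_combination hdet
  rw [hval] at key
  rcases mul_eq_zero.mp key with h' | h'
  · exact h'
  · omega

lemma contraPos (C D w11 w12 w21 w22 : ℤ)
    (h11 : 1 ≤ w11) (h12 : 0 ≤ w12) (h21 : 1 ≤ w21) (h22 : 1 ≤ w22)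
    (hdet : w11 * w22 - w12 * w21 = 1)
    (hC : C = 1 * (w11 * C + w12 * D)) (hD : D = 1 * (w21 * C + w22 * D)) : C = 0 := by
  rcases eq_or_lt_of_le h22 with h | h
  · -- w22 = 1
    have e2 : w21 * C + (w22 - 1) * D = 0 := by linarith
    rw [← h] at e2
    have : w21 * C = 0 := by linarith
    rcases mul_eq_zero.mp this with h' | h'
    · omega
    · exact h'
  · -- w22 ≥ 2
    have e1 : (w11 - 1) * C + w12 * D = 0 := by linarith
    have e2 : w21 * C + (w22 - 1) * D = 0 := by linarith
    have key : C * ((w11 - 1) * (w22 - 1) - w12 * w21) = 0 := by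
      linear_combination (w22 - 1) * e1 - w12 * e2
    have hval : (w11 - 1) * (w22 - 1) - w12 * w21 = 2 - w11 - w22 := by
      linear_combination hdet
    rw [hval] at key
    rcases mul_eq_zero.mp key with h' | h'
    · exact h'
    · omega

lemma invariant (hv : qwValid m s) {ℓ : ZMod m × Bool → ℤ}
    (hw : ∀ v, wt (qwGraph m s) ℓ v = 0) {n₀ : ℕ} (h0 : Sb s n₀ = false) (r : ℕ) :
    ∃ w11 w12 w21 w22 : ℤ,
      1 ≤ w11 ∧ 0 ≤ w12 ∧ 0 ≤ w21 ∧ 1 ≤ w22 ∧ w11 * w22 - w12 * w21 = 1 ∧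
      ((∃ r', r' < r ∧ Even (gap hv (walk hv n₀ r'))) → 1 ≤ w21) ∧
      ((∀ r', r' < r → Odd (gap hv (walk hv n₀ r'))) → w21 = 0 ∧ w11 = 1 ∧ w22 = 1) ∧
      ccv ℓ (walk hv n₀ r) = sigma hv n₀ r * (w11 * ccv ℓ n₀ + w12 * ddv ℓ n₀) ∧
      ddv ℓ (walk hv n₀ r) = sigma hv n₀ r * (w21 * ccv ℓ n₀ + w22 * ddv ℓ n₀) := by
  induction r with
  | zero =>
    refine ⟨1, 0, 0, 1, by norm_num, by norm_num, by norm_num, by norm_num, by norm_num,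
      by intro ⟨r', hr', _⟩; omega, by intro _; norm_num, ?_, ?_⟩ <;>
      · show _ = sigma hv n₀ 0 * _
        simp [sigma, walk]
  | succ r ih =>
    obtain ⟨w11, w12, w21, w22, h11, h12, h21, h22, hdet, heven, hodd, hc, hd⟩ := ih
    set p := walk hv n₀ r with hp
    set j := gap hv p with hj
    have hpf : Sb s p = false := walk_false hv h0 r
    have hjf : Sb s (p + j) = false := gap_zero hv p
    have hj2 : 2 ≤ j := gap_two hv hpf
    have hmin : ∀ r', 1 ≤ r' → r' < j → Sb s (p + r') = true := fun r' h1 h2 => gap_min hv p h1 h2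
    have hstep := stepLemma hv hw p j hpf hjf hmin hj2
    have hwsucc : walk hv n₀ (r + 1) = p + j := rfl
    have hssucc : sigma hv n₀ (r + 1) = sigma hv n₀ r * sg j := by
      unfold sigma
      rw [Finset.prod_range_succ]
    rcases Nat.even_or_odd j with hev | hod
    · -- even step : V-type
      obtain ⟨hc', hd'⟩ := hstep.2 hev
      refine ⟨w11, w12, w21 + w11, w22 + w12, h11, h12, by omega, by omega,
        by linear_combination hdet, fun _ => by omega, ?_, ?_, ?_⟩
      · intro hallodd
        exfalso
        have := hallodd r (by omega)
        rw [← hj] at this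
        exact (Nat.not_even_iff_odd.mpr this) hev
      · rw [hwsucc, hc', hssucc, hc]; ring
      · rw [hwsucc, hd', hssucc, hc, hd]; ring
    · -- odd step : U-type
      obtain ⟨hc', hd'⟩ := hstep.1 hod
      refine ⟨w11 + 2 * w21, w12 + 2 * w22, w21, w22, by omega, by omega, h21, h22,
        by linear_combination hdet, ?_, ?_, ?_, ?_⟩
      · intro ⟨r', hr', hevr⟩
        apply heven
        refine ⟨r', ?_, hevr⟩
        rcases Nat.lt_or_ge r' r with h | h
        · exact h
        · exfalso
          have : r' = r := by omega
          rw [this, ← hj] at hevr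
          exact (Nat.not_even_iff_odd.mpr hod) hevr
      · intro hallodd
        have := hodd (fun r' hr' => hallodd r' (by omega))
        refine ⟨this.1, by omega, this.2.2⟩
      · rw [hwsucc, hc', hssucc, hc, hd]; ring
      · rw [hwsucc, hd', hssucc, hd]; ring

lemma ccv_add_m (ℓ : ZMod m × Bool → ℤ) (n : ℕ) : ccv ℓ (n + m) = ccv ℓ n := by
  unfold ccv; push_cast [ZMod.natCast_self]; ring_nf

lemma ddv_add_m (ℓ : ZMod m × Bool → ℤ) (n : ℕ) : ddv ℓ (n + m) = ddv ℓ n := by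
  unfold ddv; push_cast [ZMod.natCast_self]; ring_nf

lemma walk_isSeg (hv : qwValid m s) {n₀ : ℕ} (h0 : Sb s n₀ = false) (r : ℕ) :
    IsSegment s ((walk hv n₀ r : ℕ) : ZMod m) (gap hv (walk hv n₀ r)) := by
  set p := walk hv n₀ r with hp
  have hpf : Sb s p = false := walk_false hv h0 r
  refine ⟨hpf, gap_pos hv p, ?_, ?_⟩
  · have := gap_zero hv p
    unfold Sb at this; push_cast at this; exact this
  · intro r' h1 h2
    have := gap_min hv p h1 h2
    unfold Sb at this; push_cast at this; exact this

lemma no_even (hv : qwValid m s) {ℓ : ZMod m × Bool → ℤ} (hinj : Function.Injective ℓ)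
    (hw : ∀ v, wt (qwGraph m s) ℓ v = 0) {i : ZMod m} {j : ℕ} (hseg : IsSegment s i j) :
    ¬ Even j := by
  intro hev
  have hm := hv.1
  haveI : NeZero m := ⟨by omega⟩
  set n₀ := ZMod.val i with hn₀
  have hcast : ((n₀ : ℕ) : ZMod m) = i := ZMod.natCast_rightInverse i
  have h0 : Sb s n₀ = false := by unfold Sb; rw [hcast]; exact hseg.1
  have hgap : gap hv n₀ = j := gap_eq_of_isSegment hv (by rwa [← hcast] at hseg)
  obtain ⟨t, ht0, htm, htmin⟩ := walk_hit hv h0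
  obtain ⟨w11, w12, w21, w22, h11, h12, h21, h22, hdet, heven, _, hc, hd⟩ :=
    invariant hv hw h0 t
  have h21p : 1 ≤ w21 := by
    apply heven
    refine ⟨0, ht0, ?_⟩
    have : walk hv n₀ 0 = n₀ := rfl
    rw [this, hgap]; exact hev
  rw [htm, ccv_add_m] at hc
  rw [htm, ddv_add_m] at hd
  have hcz := czero hv hinj hw h0
  rcases sigma_cases hv n₀ t with hσ | hσ
  · rw [hσ] at hc hd
    exact hcz (contraPos _ _ _ _ _ _ h11 h12 h21p h22 hdet hc hd)
  · rw [hσ] at hc hd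
    exact hcz (contraNeg _ _ _ _ _ _ h11 h12 h21 h22 hdet hc hd)

lemma zeros_are_walk (hv : qwValid m s) {n₀ : ℕ} (h0 : Sb s n₀ = false)
    {t : ℕ} (htm : walk hv n₀ t = n₀ + m) {n : ℕ} (hn1 : n₀ ≤ n) (hn2 : n < n₀ + m)
    (hnf : Sb s n = false) : ∃ r, r < t ∧ walk hv n₀ r = n := by
  have hex : ∃ r, n < walk hv n₀ r := ⟨t, by omega⟩
  set rstar := Nat.find hex with hr
  have hspec := Nat.find_spec hex
  rw [← hr] at hspec
  have hpos : 0 < rstar := by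
    rcases Nat.eq_zero_or_pos rstar with h | h
    · exfalso
      rw [h] at hspec
      have : walk hv n₀ 0 = n₀ := rfl
      omega
    · exact h
  set r := rstar - 1 with hrr
  have hle : walk hv n₀ r ≤ n := by
    have := Nat.find_min hex (show r < rstar by omega)
    omega
  have hlt : n < walk hv n₀ (r + 1) := by
    have : r + 1 = rstar := by omega
    rw [this]; exact hspec
  have hweq : walk hv n₀ r = n := by
    by_contra hne
    have hlt2 : walk hv n₀ r < n := by omega
    have hd : n = walk hv n₀ r + (n - walk hv n₀ r) := by omega
    have h1 : 1 ≤ n - walk hv n₀ r := by omega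
    have h2 : n - walk hv n₀ r < gap hv (walk hv n₀ r) := by
      have : walk hv n₀ (r + 1) = walk hv n₀ r + gap hv (walk hv n₀ r) := rfl
      omega
    have := gap_min hv (walk hv n₀ r) h1 h2
    rw [← hd] at this
    rw [this] at hnf; cases hnf
  refine ⟨r, ?_, hweq⟩
  by_contra hge
  have : walk hv n₀ t ≤ walk hv n₀ r := (walk_mono hv n₀).monotone (by omega)
  omega

lemma claim3 (hv : qwValid m s) {ℓ : ZMod m × Bool → ℤ} (hinj : Function.Injective ℓ)
    (hw : ∀ v, wt (qwGraph m s) ℓ v = 0) :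
    Even {i : ZMod m | ∃ j : ℕ, IsSegment s i j ∧ j % 4 = 1}.ncard := by
  have hm := hv.1
  haveI : NeZero m := ⟨by omega⟩
  have h00 : Sb s 0 = false := by
    show s ((0 : ℕ) : ZMod m) = false
    rw [Nat.cast_zero]; exact hv.2.1
  obtain ⟨t, ht0, htm, htmin⟩ := walk_hit hv h00
  have hallodd : ∀ r, Odd (gap hv (walk hv 0 r)) := fun r =>
    Nat.not_even_iff_odd.mp (no_even hv hinj hw (walk_isSeg hv h00 r))
  obtain ⟨w11, w12, w21, w22, h11, h12, h21, h22, hdet, _, hodd, hc, hd⟩ :=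
    invariant hv hw h00 t
  obtain ⟨hw21, hw11, hw22⟩ := hodd (fun r' _ => hallodd r')
  rw [htm, ccv_add_m] at hc
  rw [htm, ddv_add_m] at hd
  have hcz := czero hv hinj hw h00
  have hσ : sigma hv 0 t = 1 := by
    rcases sigma_cases hv 0 t with h | h
    · exact h
    · exfalso
      rw [h] at hc hd
      exact hcz (contraNeg _ _ _ _ _ _ h11 h12 h21 h22 hdet hc hd)
  -- sigma as power of -1
  have hsig : ∀ r, sigma hv 0 r =
      (-1 : ℤ) ^ ((Finset.range r).filter (fun r' => gap hv (walk hv 0 r') % 4 = 1)).card := by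
    intro r
    induction r with
    | zero => simp [sigma]
    | succ r ih =>
      unfold sigma
      rw [Finset.prod_range_succ]
      unfold sigma at ih
      rw [ih, Finset.range_add_one, Finset.filter_insert]
      by_cases hcase : gap hv (walk hv 0 r) % 4 = 1
      · rw [if_pos hcase, Finset.card_insert_of_notMem (by simp), pow_succ]
        have : sg (gap hv (walk hv 0 r)) = -1 := by simp [sg, hcase]
        rw [this]
      · rw [if_neg hcase]
        have h3 : gap hv (walk hv 0 r) % 4 = 3 := by
          have := Nat.odd_iff.mp (hallodd r)
          omega
        have : sg (gap hv (walk hv 0 r)) = 1 := by simp [sg, h3]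
        rw [this, mul_one]
  set F := (Finset.range t).filter (fun r' => gap hv (walk hv 0 r') % 4 = 1) with hF
  have hcard : Even F.card := by
    rcases Nat.even_or_odd F.card with h | h
    · exact h
    · exfalso
      have := hsig t
      rw [hσ, ← hF, h.neg_one_pow] at this
      norm_num at this
  -- the set equals the image of F
  have hwlt : ∀ r, r < t → walk hv 0 r < m := by
    intro r hr
    have := htmin r hr
    omega
  have hinjOn : Set.InjOn (fun r => ((walk hv 0 r : ℕ) : ZMod m)) ↑F := by
    intro r hr r' hr' heq
    simp only [hF, Finset.coe_filter, Set.mem_setOf_eq, Finset.mem_range] at hr hr'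
    have e1 : ZMod.val ((walk hv 0 r : ℕ) : ZMod m) = walk hv 0 r :=
      ZMod.val_cast_of_lt (hwlt r hr.1)
    have e2 : ZMod.val ((walk hv 0 r' : ℕ) : ZMod m) = walk hv 0 r' :=
      ZMod.val_cast_of_lt (hwlt r' hr'.1)
    have : walk hv 0 r = walk hv 0 r' := by
      rw [← e1, ← e2]; exact congrArg ZMod.val heq
    exact (walk_mono hv 0).injective this
  have hseteq : {i : ZMod m | ∃ j : ℕ, IsSegment s i j ∧ j % 4 = 1} =
      ↑(F.image (fun r => ((walk hv 0 r : ℕ) : ZMod m))) := by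
    ext i
    simp only [Set.mem_setOf_eq, Finset.coe_image, Set.mem_image, Finset.mem_coe,
      Finset.mem_filter, Finset.mem_range, hF]
    constructor
    · rintro ⟨j, hseg, h4⟩
      set n := ZMod.val i with hn
      have hcast : ((n : ℕ) : ZMod m) = i := ZMod.natCast_rightInverse i
      have hn2 : n < m := ZMod.val_lt i
      have h0n : Sb s n = false := by unfold Sb; rw [hcast]; exact hseg.1
      obtain ⟨r, hrt, hwr⟩ := zeros_are_walk hv h00 htm (by omega) (by omega) h0n
      have hgap : gap hv (walk hv 0 r) = j := by
        apply gap_eq_of_isSegment hv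
        rw [hwr, hcast]
        exact hseg
      exact ⟨r, ⟨hrt, by rw [hgap]; exact h4⟩, by rw [hwr, hcast]⟩
    · rintro ⟨r, ⟨hrt, h4⟩, rfl⟩
      exact ⟨gap hv (walk hv 0 r), walk_isSeg hv h00 r, h4⟩
  rw [hseteq, Set.ncard_coe_finset, Finset.card_image_of_injOn hinjOn]
  exact hcard

end walkSec


theorem stmt9 (m : ℕ) (s : ZMod m → Bool) (hv : qwValid m s)
    (hdm : IsDMZero (qwGraph m s) (2 * m)) :
    (∀ (i : ZMod m) (j : ℕ), IsSegment s i j → Odd j) ∧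
    (∀ (i : ZMod m) (j : ℕ), IsSegment s i j → j % 4 = 1 ∨ j % 4 = 3) ∧
    Even {i : ZMod m | ∃ j : ℕ, IsSegment s i j ∧ j % 4 = 1}.ncard := by
  obtain ⟨ℓ, hinj, _, hw⟩ := hdm
  refine ⟨?_, ?_, ?_⟩
  · intro i j hseg
    exact Nat.not_even_iff_odd.mp (no_even hv hinj hw hseg)
  · intro i j hseg
    have h := Nat.odd_iff.mp (Nat.not_even_iff_odd.mp (no_even hv hinj hw hseg))
    omega
  · exact claim3 hv hinj hw
end

section
/- Let Γ be a 4-regular distance magic graph of order n admitting a distance magic labeling ℓ (onto {1−n,...,n−1}, all weights 0) and a 4-cycle C = (a, b, c, d) with ℓ(a) + ℓ(c) = 0 and ℓ(b) + ℓ(d) = 0. Then the graph Γ' of order n+2 obtained by deleting the four edges of C, adding two new vertices, and joining each new vertex to all four vertices of C, is a 4-regular distance magic graph. -/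
/-- The edges of the 4-cycle `(a, b, c, d)`, in one direction. -/
def kfkCyc {V : Type*} (a b c d : V) (u v : V) : Prop :=
  (u = a ∧ v = b) ∨ (u = b ∧ v = c) ∨ (u = c ∧ v = d) ∨ (u = d ∧ v = a)

/-- The graph obtained from `G` by deleting the four edges of the 4-cycle `(a, b, c, d)`,
adding two new vertices and joining each of them to all four vertices of the cycle. -/
def kfkGraph {V : Type*} (G : SimpleGraph V) (a b c d : V) :
    SimpleGraph (V ⊕ Fin 2) where
  Adj x y :=
    match x, y with
    | Sum.inl u, Sum.inl v => G.Adj u v ∧ ¬(kfkCyc a b c d u v ∨ kfkCyc a b c d v u)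
    | Sum.inl u, Sum.inr _ => u = a ∨ u = b ∨ u = c ∨ u = d
    | Sum.inr _, Sum.inl v => v = a ∨ v = b ∨ v = c ∨ v = d
    | Sum.inr _, Sum.inr _ => False
  symm := ⟨by
    rintro (u | u) (v | v) h
    · exact ⟨h.1.symm, fun hc => h.2 hc.symm⟩
    · exact h
    · exact h
    · exact h⟩
  loopless := ⟨by
    rintro (u | u) h
    · exact G.irrefl h.1
    · exact h⟩

section Helpers

lemma zeroLabels_add_two (n : ℕ) :
    zeroLabels (n + 2) = zeroLabels n ∪ {(n : ℤ) + 1, -((n : ℤ) + 1)} := by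
  ext x
  simp only [zeroLabels, Set.mem_setOf_eq, Set.mem_union, Set.mem_insert_iff,
    Set.mem_singleton_iff]
  constructor
  · rintro ⟨k, hk, rfl⟩
    rcases Nat.lt_or_ge 0 k with h0 | h0
    · rcases Nat.lt_or_ge k (n + 1) with h1 | h1
      · exact Or.inl ⟨k - 1, by omega, by omega⟩
      · right; left; omega
    · right; right; omega
  · rintro (⟨k, hk, rfl⟩ | rfl | rfl)
    · exact ⟨k + 1, by omega, by push_cast; ring⟩
    · exact ⟨n + 1, by omega, by push_cast; ring⟩
    · exact ⟨0, by omega, by push_cast; ring⟩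

lemma kfk_rot {V : Type*} (G : SimpleGraph V) (a b c d : V) :
    kfkGraph G a b c d = kfkGraph G b c d a := by
  have h : ∀ u v : V, kfkCyc a b c d u v ↔ kfkCyc b c d a u v := by
    intro u v; unfold kfkCyc; tauto
  ext x y
  cases x <;> cases y <;> simp only [kfkGraph, h] <;> tauto

lemma kfk_nbhd_cyc {V : Type*} (G : SimpleGraph V) {a b c d : V}
    (hab : a ≠ b) (hac : a ≠ c) (had : a ≠ d) :
    {u | (kfkGraph G a b c d).Adj (Sum.inl a) u} =
      (Sum.inl '' ({u | G.Adj a u} \ {b, d})) ∪ {Sum.inr 0, Sum.inr 1} := by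
  ext u
  cases u with
  | inl u =>
    simp only [kfkGraph, kfkCyc, Set.mem_setOf_eq, Set.mem_union, Set.mem_image,
      Set.mem_diff, Set.mem_insert_iff, Set.mem_singleton_iff, Sum.inl.injEq, reduceCtorEq,
      or_false]
    constructor
    · rintro ⟨h1, h2⟩
      exact ⟨u, ⟨h1, fun h => h2 (by tauto)⟩, rfl⟩
    · rintro ⟨x, ⟨h1, h2⟩, rfl⟩
      exact ⟨h1, fun h => h2 (by tauto)⟩
  | inr i =>
    simp only [kfkGraph, Set.mem_setOf_eq, Set.mem_union, Set.mem_image, Set.mem_insert_iff,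
      Set.mem_singleton_iff, Sum.inr.injEq, reduceCtorEq]
    constructor
    · intro _; right; omega
    · intro _; exact Or.inl trivial

lemma kfk_nbhd_non {V : Type*} (G : SimpleGraph V) {a b c d v : V}
    (ha : v ≠ a) (hb : v ≠ b) (hc : v ≠ c) (hd : v ≠ d) :
    {u | (kfkGraph G a b c d).Adj (Sum.inl v) u} = Sum.inl '' {u | G.Adj v u} := by
  ext u
  cases u with
  | inl u =>
    simp only [kfkGraph, kfkCyc, Set.mem_setOf_eq, Set.mem_image, Sum.inl.injEq]
    constructor
    · rintro ⟨h1, _⟩; exact ⟨u, h1, rfl⟩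
    · rintro ⟨x, h1, rfl⟩
      exact ⟨h1, fun h => by tauto⟩
  | inr i =>
    simp only [kfkGraph, Set.mem_setOf_eq, Set.mem_image, reduceCtorEq, exists_false,
      and_false, iff_false]
    tauto

lemma kfk_nbhd_inr {V : Type*} (G : SimpleGraph V) (a b c d : V) (i : Fin 2) :
    {u | (kfkGraph G a b c d).Adj (Sum.inr i) u} =
      ({Sum.inl a, Sum.inl b, Sum.inl c, Sum.inl d} : Set (V ⊕ Fin 2)) := by
  ext u
  cases u with
  | inl u =>
    simp only [kfkGraph, Set.mem_setOf_eq, Set.mem_insert_iff, Set.mem_singleton_iff,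
      Sum.inl.injEq]
  | inr j =>
    simp only [kfkGraph, Set.mem_setOf_eq, Set.mem_insert_iff, Set.mem_singleton_iff,
      reduceCtorEq, or_self, iff_false]

lemma card_helper {V : Type*} [Fintype V] {N : Set V} {b d : V}
    (hN : N.ncard = 4) (hb : b ∈ N) (hd : d ∈ N) (hbd : b ≠ d) :
    ((Sum.inl '' (N \ {b, d}) ∪ {Sum.inr 0, Sum.inr 1} : Set (V ⊕ Fin 2))).ncard = 4 := by
  have hsub : ({b, d} : Set V) ⊆ N := by
    rintro x (rfl | rfl); exacts [hb, hd]
  have h1 : (N \ ({b, d} : Set V)).ncard = 2 := by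
    rw [Set.ncard_diff hsub, Set.ncard_pair hbd, hN]
  have hdisj : Disjoint (Sum.inl '' (N \ {b, d}))
      ({Sum.inr 0, Sum.inr 1} : Set (V ⊕ Fin 2)) := by
    rw [Set.disjoint_left]
    rintro x ⟨y, _, rfl⟩ (h | h) <;> simp_all
  rw [Set.ncard_union_eq hdisj (Set.toFinite _) (Set.toFinite _),
    Set.ncard_image_of_injective _ Sum.inl_injective, h1,
    Set.ncard_pair (by simp : (Sum.inr 0 : V ⊕ Fin 2) ≠ Sum.inr 1)]

lemma wt_helper {V : Type*} [Fintype V] {N : Set V} {ℓ : V → ℤ} {b d : V}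
    (hb : b ∈ N) (hd : d ∈ N) (hbd : b ≠ d)
    (hsum : ∑ᶠ u ∈ N, ℓ u = 0) (hbd0 : ℓ b + ℓ d = 0)
    (L : V ⊕ Fin 2 → ℤ) (hL : ∀ v, L (Sum.inl v) = ℓ v)
    (hL2 : L (Sum.inr 0) + L (Sum.inr 1) = 0) :
    ∑ᶠ u ∈ (Sum.inl '' (N \ {b, d}) ∪ {Sum.inr 0, Sum.inr 1} : Set (V ⊕ Fin 2)), L u = 0 := by
  have hsub : ({b, d} : Set V) ⊆ N := by
    rintro x (rfl | rfl); exacts [hb, hd]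
  have hdisj : Disjoint (Sum.inl '' (N \ {b, d}))
      ({Sum.inr 0, Sum.inr 1} : Set (V ⊕ Fin 2)) := by
    rw [Set.disjoint_left]
    rintro x ⟨y, _, rfl⟩ (h | h) <;> simp_all
  rw [finsum_mem_union hdisj (Set.toFinite _) (Set.toFinite _),
    finsum_mem_image Sum.inl_injective.injOn,
    finsum_mem_pair (by simp : (Sum.inr 0 : V ⊕ Fin 2) ≠ Sum.inr 1), hL2]
  have hdisj2 : Disjoint (N \ ({b, d} : Set V)) ({b, d} : Set V) :=
    Set.disjoint_sdiff_left
  have hsplit : N = (N \ ({b, d} : Set V)) ∪ {b, d} := by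
    rw [Set.diff_union_of_subset hsub]
  rw [hsplit, finsum_mem_union hdisj2 (Set.toFinite _) (Set.toFinite _),
    finsum_mem_pair hbd] at hsum
  simp only [hL]
  omega

end Helpers

theorem stmt12 {V : Type*} [Fintype V] (G : SimpleGraph V) (hreg : IsReg G 4)
    (ℓ : V → ℤ) (hinj : Function.Injective ℓ)
    (hrange : Set.range ℓ = zeroLabels (Fintype.card V))
    (hw : ∀ v, wt G ℓ v = 0)
    (a b c d : V) (hac : a ≠ c) (hbd : b ≠ d)
    (hab : G.Adj a b) (hbc : G.Adj b c) (hcd : G.Adj c d) (hda : G.Adj d a)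
    (hlac : ℓ a + ℓ c = 0) (hlbd : ℓ b + ℓ d = 0) :
    IsReg (kfkGraph G a b c d) 4 ∧
      IsDMZero (kfkGraph G a b c d) (Fintype.card V + 2) := by
  have hab' : a ≠ b := hab.ne
  have hbc' : b ≠ c := hbc.ne
  have hcd' : c ≠ d := hcd.ne
  have hda' : d ≠ a := hda.ne
  set n := Fintype.card V with hn
  -- rotations of the graph
  have rot1 : kfkGraph G a b c d = kfkGraph G b c d a := kfk_rot G a b c d
  have rot2 : kfkGraph G a b c d = kfkGraph G c d a b := by
    rw [rot1, kfk_rot G b c d a]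
  have rot3 : kfkGraph G a b c d = kfkGraph G d a b c := by
    rw [rot2, kfk_rot G c d a b]
  -- neighborhoods
  have Nea : {u | (kfkGraph G a b c d).Adj (Sum.inl a) u} =
      (Sum.inl '' ({u | G.Adj a u} \ {b, d})) ∪ {Sum.inr 0, Sum.inr 1} :=
    kfk_nbhd_cyc G hab' hac hda'.symm
  have Neb : {u | (kfkGraph G a b c d).Adj (Sum.inl b) u} =
      (Sum.inl '' ({u | G.Adj b u} \ {c, a})) ∪ {Sum.inr 0, Sum.inr 1} := by
    rw [rot1]; exact kfk_nbhd_cyc G hbc' hbd hab'.symm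
  have Nec : {u | (kfkGraph G a b c d).Adj (Sum.inl c) u} =
      (Sum.inl '' ({u | G.Adj c u} \ {d, b})) ∪ {Sum.inr 0, Sum.inr 1} := by
    rw [rot2]; exact kfk_nbhd_cyc G hcd' hac.symm hbc'.symm
  have Ned : {u | (kfkGraph G a b c d).Adj (Sum.inl d) u} =
      (Sum.inl '' ({u | G.Adj d u} \ {a, c})) ∪ {Sum.inr 0, Sum.inr 1} := by
    rw [rot3]; exact kfk_nbhd_cyc G hda' hbd.symm hcd'.symm
  -- memberships
  have mab : b ∈ {u | G.Adj a u} := hab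
  have mad : d ∈ {u | G.Adj a u} := hda.symm
  have mbc : c ∈ {u | G.Adj b u} := hbc
  have mba : a ∈ {u | G.Adj b u} := hab.symm
  have mcd : d ∈ {u | G.Adj c u} := hcd
  have mcb : b ∈ {u | G.Adj c u} := hbc.symm
  have mda : a ∈ {u | G.Adj d u} := hda
  have mdc : c ∈ {u | G.Adj d u} := hcd.symm
  constructor
  · -- regularity
    rintro (v | i)
    · rcases eq_or_ne v a with rfl | hva
      · rw [Nea]; exact card_helper (hreg v) mab mad hbd
      rcases eq_or_ne v b with rfl | hvb
      · rw [Neb]; exact card_helper (hreg v) mbc mba hac.symm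
      rcases eq_or_ne v c with rfl | hvc
      · rw [Nec]; exact card_helper (hreg v) mcd mcb hbd.symm
      rcases eq_or_ne v d with rfl | hvd
      · rw [Ned]; exact card_helper (hreg v) mda mdc hac
      · rw [kfk_nbhd_non G hva hvb hvc hvd,
          Set.ncard_image_of_injective _ Sum.inl_injective]
        exact hreg v
    · rw [kfk_nbhd_inr]
      rw [Set.ncard_insert_of_notMem (by simp [hab', hac, hda'.symm]) (Set.toFinite _),
        Set.ncard_insert_of_notMem (by simp [hbc', hbd]) (Set.toFinite _),
        Set.ncard_pair (by simp [hcd'])]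
  · -- distance magic
    refine ⟨Sum.elim ℓ (fun i => if i = 0 then ((n : ℤ) + 1) else -((n : ℤ) + 1)), ?_, ?_, ?_⟩
    case _ =>
      -- injectivity
      have hbound : ∀ v, 1 - (n : ℤ) ≤ ℓ v ∧ ℓ v ≤ (n : ℤ) - 1 := by
        intro v
        have hv : ℓ v ∈ zeroLabels n := hrange ▸ Set.mem_range_self v
        obtain ⟨k, hk, he⟩ := hv
        omega
      rintro (x | i) (y | j) h
      · simp only [Sum.elim_inl] at h; exact congrArg Sum.inl (hinj h)
      · simp only [Sum.elim_inl, Sum.elim_inr] at h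
        have := hbound x
        split at h <;> omega
      · simp only [Sum.elim_inl, Sum.elim_inr] at h
        have := hbound y
        split at h <;> omega
      · simp only [Sum.elim_inr] at h
        congr 1
        fin_cases i <;> fin_cases j <;> simp_all <;> omega
    case _ =>
      -- range
      rw [Set.Sum.elim_range, hrange]
      have : Set.range (fun i : Fin 2 => if i = 0 then ((n : ℤ) + 1) else -((n : ℤ) + 1)) =
          {(n : ℤ) + 1, -((n : ℤ) + 1)} := by
        ext x
        simp only [Set.mem_range, Set.mem_insert_iff, Set.mem_singleton_iff]
        constructor
        · rintro ⟨i, rfl⟩; fin_cases i <;> simp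
        · rintro (rfl | rfl)
          exacts [⟨0, by simp⟩, ⟨1, by simp⟩]
      rw [this, zeroLabels_add_two]
    case _ =>
      -- weights
      have hw' : ∀ v, ∑ᶠ u ∈ {u | G.Adj v u}, ℓ u = 0 := hw
      set L : V ⊕ Fin 2 → ℤ :=
        Sum.elim ℓ (fun i => if i = 0 then ((n : ℤ) + 1) else -((n : ℤ) + 1)) with hLdef
      have hL : ∀ v, L (Sum.inl v) = ℓ v := fun _ => rfl
      have hL2 : L (Sum.inr 0) + L (Sum.inr 1) = 0 := by simp [hLdef]
      rintro (v | i)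
      · show ∑ᶠ u ∈ {u | (kfkGraph G a b c d).Adj (Sum.inl v) u}, L u = 0
        rcases eq_or_ne v a with rfl | hva
        · rw [Nea]; exact wt_helper mab mad hbd (hw' v) hlbd L hL hL2
        rcases eq_or_ne v b with rfl | hvb
        · rw [Neb]
          exact wt_helper mbc mba hac.symm (hw' v) (by omega) L hL hL2
        rcases eq_or_ne v c with rfl | hvc
        · rw [Nec]
          exact wt_helper mcd mcb hbd.symm (hw' v) (by omega) L hL hL2
        rcases eq_or_ne v d with rfl | hvd
        · rw [Ned]
          exact wt_helper mda mdc hac (hw' v) (by omega) L hL hL2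
        · rw [kfk_nbhd_non G hva hvb hvc hvd,
            finsum_mem_image Sum.inl_injective.injOn]
          exact hw' v
      · show ∑ᶠ u ∈ {u | (kfkGraph G a b c d).Adj (Sum.inr i) u}, L u = 0
        rw [kfk_nbhd_inr]
        have hset : ({Sum.inl a, Sum.inl b, Sum.inl c, Sum.inl d} : Set (V ⊕ Fin 2)) =
            ({Sum.inl a, Sum.inl b} : Set (V ⊕ Fin 2)) ∪ {Sum.inl c, Sum.inl d} := by
          rw [Set.insert_union, Set.singleton_union]
        have hdisj : Disjoint ({Sum.inl a, Sum.inl b} : Set (V ⊕ Fin 2))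
            ({Sum.inl c, Sum.inl d} : Set (V ⊕ Fin 2)) := by
          rw [Set.disjoint_left]
          rintro x (rfl | rfl) (h | h) <;> simp_all
        rw [hset, finsum_mem_union hdisj (Set.toFinite _) (Set.toFinite _),
          finsum_mem_pair (by simp [hab'] : (Sum.inl a : V ⊕ Fin 2) ≠ Sum.inl b),
          finsum_mem_pair (by simp [hcd'] : (Sum.inl c : V ⊕ Fin 2) ≠ Sum.inl d)]
        simp only [hL]
        omega
end

section
/- For every integer n ≥ 4, the wreath graph W(n) contains no 3-cycle, while every quasi wreath graph QW(S) contains a 3-cycle; consequently, for n ≥ 4, W(n) is not isomorphic to any quasi wreath graph of the same order. -/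
theorem stmt13 (n : ℕ) (hn : 4 ≤ n) :
    (¬ ∃ x y z : ZMod n × Bool,
      (wreath n).Adj x y ∧ (wreath n).Adj y z ∧ (wreath n).Adj x z) ∧
    (∀ (m : ℕ) (s : ZMod m → Bool), qwValid m s →
      ∃ x y z : ZMod m × Bool,
        (qwGraph m s).Adj x y ∧ (qwGraph m s).Adj y z ∧ (qwGraph m s).Adj x z) ∧
    (∀ s : ZMod n → Bool, qwValid n s → IsEmpty (wreath n ≃g qwGraph n s)) := by
  haveI : NeZero n := ⟨by omega⟩
  have hcast : ∀ k : ℕ, 0 < k → k < n → ((k : ℕ) : ZMod n) ≠ 0 := by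
    intro k hk hkn h
    rw [ZMod.natCast_eq_zero_iff] at h
    exact absurd (Nat.le_of_dvd hk h) (by omega)
  have h1 : (1 : ZMod n) ≠ 0 := by simpa using hcast 1 (by norm_num) (by omega)
  have h3 : (3 : ZMod n) ≠ 0 := by simpa using hcast 3 (by norm_num) (by omega)
  have part1 : ¬ ∃ x y z : ZMod n × Bool,
      (wreath n).Adj x y ∧ (wreath n).Adj y z ∧ (wreath n).Adj x z := by
    rintro ⟨x, y, z, ⟨hab, hAB⟩, ⟨hbc, hBC⟩, ⟨hac, hAC⟩⟩
    rcases hAB with h|h <;> rcases hBC with h'|h' <;> rcases hAC with h''|h''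
    · exact h1 (by linear_combination h'' - h - h')
    · exact h3 (by linear_combination -h - h' - h'')
    · exact h1 (by linear_combination h - h' - h'')
    · exact h1 (by linear_combination h' - h - h'')
    · exact h1 (by linear_combination h' - h - h'')
    · exact h1 (by linear_combination h - h' - h'')
    · exact h3 (by linear_combination -h - h' - h'')
    · exact h1 (by linear_combination h'' - h - h')
  have part2 : ∀ (m : ℕ) (s : ZMod m → Bool), qwValid m s →
      ∃ x y z : ZMod m × Bool,
        (qwGraph m s).Adj x y ∧ (qwGraph m s).Adj y z ∧ (qwGraph m s).Adj x z := by
    rintro m s ⟨hm, hs0, hsm, hcons⟩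
    haveI : NeZero m := ⟨by omega⟩
    have hmc : ∀ k : ℕ, 0 < k → k < m → ((k : ℕ) : ZMod m) ≠ 0 := by
      intro k hk hkm h
      rw [ZMod.natCast_eq_zero_iff] at h
      exact absurd (Nat.le_of_dvd hk h) (by omega)
    have hm1 : (1 : ZMod m) ≠ 0 := by simpa using hmc 1 (by norm_num) (by omega)
    have h12 : (1 : ZMod m) ≠ 2 := by
      intro h
      exact hm1 (by linear_combination -h)
    have hs1 : s 1 = true := by
      rcases hcons 0 with h|h
      · rw [hs0] at h; exact absurd h (by simp)
      · simpa using h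
    refine ⟨(1, false), (2, false), (1, true), ?_, ?_, ?_⟩
    · refine ⟨by simp [Prod.ext_iff, h12], Or.inl (Or.inl ⟨rfl, by ring⟩)⟩
    · refine ⟨by simp [Prod.ext_iff], Or.inr (Or.inr (Or.inr ⟨by simp, by ring, hs1⟩))⟩
    · refine ⟨by simp [Prod.ext_iff], Or.inl (Or.inr (Or.inl ⟨by simp, rfl, Or.inr (by
        have : (1 : ZMod m) - 1 = 0 := by ring
        rw [this]; exact hs0)⟩))⟩
  refine ⟨part1, part2, ?_⟩
  intro s hv
  constructor
  intro φ
  obtain ⟨x, y, z, h1', h2', h3'⟩ := part2 n s hv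
  exact part1 ⟨φ.symm x, φ.symm y, φ.symm z,
    φ.symm.map_adj_iff.mpr h1', φ.symm.map_adj_iff.mpr h2', φ.symm.map_adj_iff.mpr h3'⟩
end

section
/- The only connected 2-regular distance magic graph is the 4-cycle C_4. -/
lemma wt_pair {V : Type*} (G : SimpleGraph V) (ℓ : V → ℤ) {v a b : V}
    (hab : a ≠ b) (h : {u | G.Adj v u} = {a, b}) : wt G ℓ v = ℓ a + ℓ b := by
  rw [wt, h, finsum_mem_pair hab]

lemma other_neighbor {V : Type*} (G : SimpleGraph V) (hreg : IsReg G 2) (ℓ : V → ℤ) (κ : ℤ)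
    (hκ : ∀ v, wt G ℓ v = κ) {x w : V} (hadj : G.Adj x w) :
    ∃ u, G.Adj x u ∧ u ≠ w ∧ ℓ w + ℓ u = κ ∧ {t | G.Adj x t} = {w, u} := by
  obtain ⟨a, b, hab, hN⟩ := Set.ncard_eq_two.1 (hreg x)
  have hw : w ∈ ({a, b} : Set V) := hN ▸ hadj
  simp only [Set.mem_insert_iff, Set.mem_singleton_iff] at hw
  rcases hw with rfl | rfl
  · have hb : G.Adj x b := by
      have : b ∈ {t | G.Adj x t} := by rw [hN]; exact Set.mem_insert_of_mem _ rfl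
      exact this
    exact ⟨b, hb, hab.symm, by rw [← hκ x, wt_pair G ℓ hab hN], hN⟩
  · have ha : G.Adj x a := by
      have : a ∈ {t | G.Adj x t} := by rw [hN]; exact Set.mem_insert _ _
      exact this
    refine ⟨a, ha, hab, by rw [← hκ x, wt_pair G ℓ hab hN]; ring, ?_⟩
    rw [hN, Set.pair_comm]

lemma pair_eq_pair {α : Type*} {a b c d : α} (hab : a ≠ b)
    (ha : a ∈ ({c, d} : Set α)) (hb : b ∈ ({c, d} : Set α)) :
    ({c, d} : Set α) = {a, b} := by
  simp only [Set.mem_insert_iff, Set.mem_singleton_iff] at ha hb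
  rcases ha with rfl | rfl <;> rcases hb with rfl | rfl
  · exact absurd rfl hab
  · rfl
  · exact Set.pair_comm _ _
  · exact absurd rfl hab

theorem stmt18 {V : Type*} [Fintype V] (G : SimpleGraph V)
    (hconn : G.Connected) (hreg : IsReg G 2) :
    IsDMStd G (Fintype.card V) ↔ Nonempty (G ≃g SimpleGraph.cycleGraph 4) := by
  constructor
  · rintro ⟨ℓ, hinj, hrange, κ, hκ⟩
    obtain ⟨w⟩ := hconn.nonempty
    obtain ⟨x1, x2, h12, hNw⟩ := Set.ncard_eq_two.1 (hreg w)
    have hwx1 : G.Adj w x1 := by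
      have : x1 ∈ {t | G.Adj w t} := by rw [hNw]; exact Set.mem_insert _ _
      exact this
    have hwx2 : G.Adj w x2 := by
      have : x2 ∈ {t | G.Adj w t} := by rw [hNw]; exact Set.mem_insert_of_mem _ rfl
      exact this
    obtain ⟨u1, hx1u1, hu1w, hsum1, hN1⟩ := other_neighbor G hreg ℓ κ hκ hwx1.symm
    obtain ⟨u2, hx2u2, hu2w, hsum2, hN2⟩ := other_neighbor G hreg ℓ κ hκ hwx2.symm
    have hu12 : u1 = u2 := hinj (by linarith)
    subst hu12
    set u := u1 with hu
    -- distinctness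
    have hne_wx1 : w ≠ x1 := hwx1.ne
    have hne_wx2 : w ≠ x2 := hwx2.ne
    have hne_wu : w ≠ u := fun h => hu1w h.symm
    have hne_x1u : x1 ≠ u := hx1u1.ne
    have hne_x2u : x2 ≠ u := hx2u2.ne
    -- neighborhood of u
    obtain ⟨c, d, hcd, hNu0⟩ := Set.ncard_eq_two.1 (hreg u)
    have hux1 : x1 ∈ ({c, d} : Set V) := hNu0 ▸ hx1u1.symm
    have hux2 : x2 ∈ ({c, d} : Set V) := hNu0 ▸ hx2u2.symm
    have hNu : {t | G.Adj u t} = {x1, x2} := by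
      rw [hNu0]; exact pair_eq_pair h12 hux1 hux2
    -- non-adjacencies
    have hnwu : ¬ G.Adj w u := by
      intro h
      have : u ∈ ({x1, x2} : Set V) := hNw ▸ h
      simp only [Set.mem_insert_iff, Set.mem_singleton_iff] at this
      rcases this with rfl | rfl
      · exact hne_x1u rfl
      · exact hne_x2u rfl
    have hnx12 : ¬ G.Adj x1 x2 := by
      intro h
      have : x2 ∈ ({w, u} : Set V) := hN1 ▸ h
      simp only [Set.mem_insert_iff, Set.mem_singleton_iff] at this
      rcases this with rfl | rfl
      · exact hne_wx2 rfl
      · exact hne_x2u rfl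
    -- closure under adjacency
    have hsub : ∀ v t, G.Adj v t → v ∈ ({w, x1, u, x2} : Set V) →
        t ∈ ({w, x1, u, x2} : Set V) := by
      intro v t hadj hv
      simp only [Set.mem_insert_iff, Set.mem_singleton_iff] at hv ⊢
      rcases hv with rfl | rfl | rfl | rfl
      · have : t ∈ ({x1, x2} : Set V) := hNw ▸ hadj
        simp only [Set.mem_insert_iff, Set.mem_singleton_iff] at this
        tauto
      · have : t ∈ ({w, u} : Set V) := hN1 ▸ hadj
        simp only [Set.mem_insert_iff, Set.mem_singleton_iff] at this
        tauto
      · have : t ∈ ({x1, x2} : Set V) := hNu ▸ hadj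
        simp only [Set.mem_insert_iff, Set.mem_singleton_iff] at this
        tauto
      · have : t ∈ ({w, u} : Set V) := hN2 ▸ hadj
        simp only [Set.mem_insert_iff, Set.mem_singleton_iff] at this
        tauto
    have step : ∀ (a b : V), G.Walk a b → a ∈ ({w, x1, u, x2} : Set V) →
        b ∈ ({w, x1, u, x2} : Set V) := by
      intro a b p
      induction p with
      | nil => exact fun h => h
      | cons h q ih => exact fun ha => ih (hsub _ _ h ha)
    have key : ∀ v, v ∈ ({w, x1, u, x2} : Set V) := by
      intro v
      obtain ⟨p⟩ := hconn.preconnected w v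
      exact step w v p (Set.mem_insert _ _)
    -- the equivalence
    set g : Fin 4 → V := ![w, x1, u, x2] with hg
    have hginj : Function.Injective g := by
      intro a b hab
      fin_cases a <;> fin_cases b <;> simp_all [g] <;>
        first
          | rfl
          | exact absurd hab.symm (by assumption)
          | exact absurd hab (by assumption)
    have hgsurj : Function.Surjective g := by
      intro v
      have := key v
      simp only [Set.mem_insert_iff, Set.mem_singleton_iff] at this
      rcases this with rfl | rfl | rfl | rfl
      · exact ⟨0, rfl⟩
      · exact ⟨1, rfl⟩
      · exact ⟨2, rfl⟩
      · exact ⟨3, rfl⟩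
    -- adjacency facts for exact matching
    have a01 : G.Adj w x1 := hwx1
    have a10 : G.Adj x1 w := hwx1.symm
    have a12 : G.Adj x1 u := hx1u1
    have a21 : G.Adj u x1 := hx1u1.symm
    have a23 : G.Adj u x2 := hx2u2.symm
    have a32 : G.Adj x2 u := hx2u2
    have a30 : G.Adj x2 w := hwx2.symm
    have a03 : G.Adj w x2 := hwx2
    have n02 : ¬ G.Adj w u := hnwu
    have n20 : ¬ G.Adj u w := fun h => hnwu h.symm
    have n13 : ¬ G.Adj x1 x2 := hnx12
    have n31 : ¬ G.Adj x2 x1 := fun h => hnx12 h.symm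
    have n00 : ¬ G.Adj w w := G.loopless.irrefl w
    have n11 : ¬ G.Adj x1 x1 := G.loopless.irrefl x1
    have n22 : ¬ G.Adj u u := G.loopless.irrefl u
    have n33 : ¬ G.Adj x2 x2 := G.loopless.irrefl x2
    refine ⟨SimpleGraph.Iso.symm ⟨Equiv.ofBijective g ⟨hginj, hgsurj⟩, ?_⟩⟩
    intro a b
    show G.Adj (g a) (g b) ↔ (SimpleGraph.cycleGraph 4).Adj a b
    fin_cases a <;> fin_cases b <;>
      first
        | exact iff_of_true (by assumption) (by decide)
        | exact iff_of_false (by assumption) (by decide)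
  · rintro ⟨e⟩
    have hcard : Fintype.card V = 4 := by
      rw [Fintype.card_congr e.toEquiv, Fintype.card_fin]
    rw [hcard]
    set f : Fin 4 → ℤ := ![1, 2, 4, 3] with hf
    have hC : ∀ a b : Fin 4, (SimpleGraph.cycleGraph 4).Adj a b ↔ (b = a - 1 ∨ b = a + 1) := by
      decide
    refine ⟨fun v => f (e v), ?_, ?_, 5, ?_⟩
    · intro a b hab
      have hfinj : Function.Injective f := by decide
      exact e.toEquiv.injective (hfinj hab)
    · have : Set.range (fun v => f (e v)) = Set.range f := by
        ext x
        constructor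
        · rintro ⟨v, rfl⟩; exact ⟨e v, rfl⟩
        · rintro ⟨i, rfl⟩; exact ⟨e.symm i, by simp⟩
      rw [this]
      ext x
      simp only [Set.mem_range, Set.mem_Icc]
      constructor
      · rintro ⟨i, rfl⟩; fin_cases i <;> simp [f] <;> norm_num
      · rintro ⟨h1, h4⟩
        interval_cases x
        · exact ⟨0, rfl⟩
        · exact ⟨1, rfl⟩
        · exact ⟨3, rfl⟩
        · exact ⟨2, rfl⟩
    · intro v
      have hset : {t | G.Adj v t} = {e.symm (e v - 1), e.symm (e v + 1)} := by
        ext t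
        simp only [Set.mem_setOf_eq, Set.mem_insert_iff, Set.mem_singleton_iff]
        rw [← e.map_rel_iff, hC]
        constructor
        · rintro (h | h)
          · left; rw [← h]; simp
          · right; rw [← h]; simp
        · rintro (rfl | rfl)
          · left; simp
          · right; simp
      have hne : e.symm (e v - 1) ≠ e.symm (e v + 1) := by
        intro h
        have h2 := e.toEquiv.symm.injective h
        have : ∀ a : Fin 4, a - 1 ≠ a + 1 := by decide
        exact this (e v) h2
      rw [wt, hset, finsum_mem_pair hne]
      have h1 : e (e.symm (e v - 1)) = e v - 1 := by simp
      have h2 : e (e.symm (e v + 1)) = e v + 1 := by simp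
      simp only [h1, h2]
      have : ∀ i : Fin 4, f (i - 1) + f (i + 1) = 5 := by decide
      exact this (e v)
end
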